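/- arXiv:2504.02238 — 6 statements merged into one kernel-verified Lean document; each statement's English description precedes it below -/
import Mathlib

section
/- Imprecision attenuates updating (Theorem 1, sufficiency). Let f_X be a log-concave density symmetric about its mean μ, and let f and g be quasi-concave densities symmetric about 0 such that g is less precise than f. Denote by E_f[X|S=s] and E_g[X|S=s] the posterior means given signal realization s under prior f_X and noise densities f and g respectively. Then for every s ≤ μ one has E_f[X|S=s] ≤ E_g[X|S=s] ≤ μ, and for every s ≥ μ one has E_f[X|S=s] ≥ E_g[X|S=s] ≥ μ. -/
open MeasureTheory Real Set Filter

noncomputable section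

/-- A density: everywhere positive, continuously differentiable, integrates to 1,
with finite first absolute moment. -/
def IsDensity (f : ℝ → ℝ) : Prop :=
  (∀ x, 0 < f x) ∧ ContDiff ℝ 1 f ∧ (∫ x, f x) = 1 ∧
    MeasureTheory.Integrable (fun x => |x| * f x)

/-- `f` is symmetric about `m`. -/
def SymmAbout (m : ℝ) (f : ℝ → ℝ) : Prop := ∀ x, f (m + x) = f (m - x)

/-- `f` is quasi-concave. -/
def QuasiConcaveFn (f : ℝ → ℝ) : Prop :=
  ∀ x y t : ℝ, 0 ≤ t → t ≤ 1 → min (f x) (f y) ≤ f (t * x + (1 - t) * y)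

/-- `f` is log-concave. -/
def LogConcaveFn (f : ℝ → ℝ) : Prop := ConcaveOn ℝ Set.univ fun x => Real.log (f x)

/-- `g` is less precise than `f`: the ratio `g/f` is nondecreasing on `(0, ∞)`. -/
def LessPrecise (g f : ℝ → ℝ) : Prop := MonotoneOn (fun x => g x / f x) (Set.Ioi 0)

/-- Posterior mean at signal realization `s` under prior `fX` and noise density `fε`. -/
def postMean (fX fε : ℝ → ℝ) (s : ℝ) : ℝ :=
  (∫ x, x * fX x * fε (s - x)) / (∫ x, fX x * fε (s - x))

/-! ### Auxiliary pointwise lemmas -/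

lemma symm0_even {f : ℝ → ℝ} (h : SymmAbout 0 f) : ∀ x, f (-x) = f x := by
  intro x; have := h x; simpa using this.symm

/-- quasi-concave + even ⇒ nonincreasing in `|·|`. -/
lemma qc_anti {h : ℝ → ℝ} (hsym : SymmAbout 0 h) (hqc : QuasiConcaveFn h) :
    ∀ x y : ℝ, |x| ≤ |y| → h y ≤ h x := by
  have he := symm0_even hsym
  have key : ∀ a b : ℝ, 0 ≤ a → a ≤ b → h b ≤ h a := by
    intro a b ha hab
    rcases eq_or_lt_of_le (ha.trans hab) with hb | hb
    · have : a = b := le_antisymm hab (by linarith [hb.symm ▸ ha])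
      subst this; exact le_rfl
    · set t := (a + b) / (2 * b) with ht
      have ht0 : 0 ≤ t := by positivity
      have ht1 : t ≤ 1 := by rw [ht, div_le_one (by linarith)]; linarith
      have hqc' := hqc b (-b) t ht0 ht1
      have harg : t * b + (1 - t) * (-b) = a := by
        rw [ht]; linear_combination div_mul_cancel₀ (a + b) (mul_pos two_pos hb).ne'
      rw [harg, he b, min_self] at hqc'
      exact hqc'
  intro x y hxy
  have hx : h x = h |x| := by rcases abs_cases x with ⟨e, _⟩ | ⟨e, _⟩ <;> rw [e]; rw [he]
  have hy : h y = h |y| := by rcases abs_cases y with ⟨e, _⟩ | ⟨e, _⟩ <;> rw [e]; rw [he]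
  rw [hx, hy]; exact key _ _ (abs_nonneg x) hxy

lemma logconcave_qc {f : ℝ → ℝ} (hpos : ∀ x, 0 < f x) (hlc : LogConcaveFn f) :
    QuasiConcaveFn f := by
  intro x y t ht0 ht1
  have h := hlc.2 (mem_univ x) (mem_univ y) (show (0:ℝ) ≤ t from ht0)
    (show (0:ℝ) ≤ 1 - t by linarith) (by ring)
  simp only [smul_eq_mul] at h
  have hmin : min (Real.log (f x)) (Real.log (f y))
      ≤ t * Real.log (f x) + (1 - t) * Real.log (f y) := by
    rcases le_total (Real.log (f x)) (Real.log (f y)) with hc | hc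
    · rw [min_eq_left hc]; nlinarith
    · rw [min_eq_right hc]; nlinarith
  have hle : min (Real.log (f x)) (Real.log (f y)) ≤ Real.log (f (t * x + (1 - t) * y)) :=
    hmin.trans h
  have hmm : min (Real.log (f x)) (Real.log (f y)) = Real.log (min (f x) (f y)) := by
    rcases le_total (f x) (f y) with hc | hc
    · rw [min_eq_left hc, min_eq_left (Real.log_le_log (hpos x) hc)]
    · rw [min_eq_right hc, min_eq_right (Real.log_le_log (hpos y) hc)]
  rw [hmm] at hle
  have := Real.exp_le_exp.2 hle
  rwa [Real.exp_log (lt_min (hpos x) (hpos y)), Real.exp_log (hpos _)] at this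

/-- four-point concavity inequality -/
lemma concave_four {L : ℝ → ℝ} (hL : ConcaveOn ℝ Set.univ L) {a b c : ℝ}
    (hac : a ≤ c) (hcb : c ≤ b) : L a + L b ≤ L c + L (a + b - c) := by
  rcases eq_or_lt_of_le (hac.trans hcb) with hab | hab
  · have h1 : c = a := le_antisymm (hab ▸ hcb) hac
    rw [h1]; have : a + b - a = b := by ring
    rw [this]
  · set t := (b - c) / (b - a) with ht
    have hba : 0 < b - a := by linarith
    have ht0 : 0 ≤ t := by apply div_nonneg <;> linarith
    have ht1 : t ≤ 1 := by rw [ht, div_le_one hba]; linarith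
    have h1 := hL.2 (mem_univ a) (mem_univ b) (show (0:ℝ) ≤ t from ht0)
      (show (0:ℝ) ≤ 1 - t by linarith) (by ring)
    have h2 := hL.2 (mem_univ a) (mem_univ b) (show (0:ℝ) ≤ 1 - t by linarith)
      (show (0:ℝ) ≤ t from ht0) (by ring)
    simp only [smul_eq_mul] at h1 h2
    have e1 : t * a + (1 - t) * b = c := by rw [ht]; linear_combination -(div_mul_cancel₀ (b - c) hba.ne')
    have e2 : (1 - t) * a + t * b = a + b - c := by rw [ht]; linear_combination div_mul_cancel₀ (b - c) hba.ne'
    rw [e1] at h1; rw [e2] at h2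
    linarith

/-- single comparison: the prior puts more mass on the side towards its center -/
lemma lc_pair_single {fX : ℝ → ℝ} (hpos : ∀ x, 0 < fX x) (hsym : SymmAbout 0 fX)
    (hlc : LogConcaveFn fX) {s t : ℝ} (hs : s ≤ 0) (ht : 0 ≤ t) :
    fX (s - t) ≤ fX (s + t) := by
  apply qc_anti hsym (logconcave_qc hpos hlc)
  have h1 : |s - t| = t - s := by rw [abs_of_nonpos (by linarith)]; ring
  rw [h1, abs_le]; constructor <;> linarith

/-- four-point product inequality for the log-concave symmetric prior -/
lemma lc_pair_double {fX : ℝ → ℝ} (hpos : ∀ x, 0 < fX x) (hsym : SymmAbout 0 fX)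
    (hlc : LogConcaveFn fX) {s u v : ℝ} (hs : s ≤ 0) (hv : 0 ≤ v) (hvu : v ≤ u) :
    fX (s - u) * fX (s + v) ≤ fX (s + u) * fX (s - v) := by
  have he := symm0_even hsym
  have key := concave_four hlc (a := s + v) (b := u - s) (c := s + u) (by linarith) (by linarith)
  have e1 : s + v + (u - s) - (s + u) = v - s := by ring
  rw [e1] at key
  have e2 : Real.log (fX (u - s)) = Real.log (fX (s - u)) := by
    rw [← he (s - u)]; norm_num
  have e3 : Real.log (fX (v - s)) = Real.log (fX (s - v)) := by
    rw [← he (s - v)]; norm_num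
  rw [e2, e3] at key
  have lmul : Real.log (fX (s - u) * fX (s + v)) ≤ Real.log (fX (s + u) * fX (s - v)) := by
    rw [Real.log_mul (hpos _).ne' (hpos _).ne', Real.log_mul (hpos _).ne' (hpos _).ne']
    linarith
  have := Real.exp_le_exp.2 lmul
  rwa [Real.exp_log (mul_pos (hpos _) (hpos _)),
    Real.exp_log (mul_pos (hpos _) (hpos _))] at this

/-- ratio comparison, extended to `v = 0` by continuity -/
lemma ratio_le {f g : ℝ → ℝ} (hfpos : ∀ x, 0 < f x) (hfc : Continuous f) (hgc : Continuous g)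
    (hprec : LessPrecise g f) {u v : ℝ} (hv : 0 ≤ v) (hvu : v ≤ u) :
    f u * g v ≤ g u * f v := by
  have main : g v / f v ≤ g u / f u := by
    rcases eq_or_lt_of_le hvu with h | hvu'
    · rw [h]
    rcases eq_or_lt_of_le hv with h0 | hv'
    · subst h0
      have hu : (0:ℝ) < u := hvu'
      have hcont : ContinuousAt (fun x => g x / f x) 0 :=
        (hgc.continuousAt).div (hfc.continuousAt) (hfpos 0).ne'
      have htend : Tendsto (fun x => g x / f x) (nhdsWithin 0 (Ioi 0)) (nhds (g 0 / f 0)) :=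
        hcont.continuousWithinAt.tendsto
      refine le_of_tendsto htend ?_
      filter_upwards [Ioo_mem_nhdsGT_of_mem (by constructor <;> simp [hu] : (0:ℝ) ∈ Ico 0 u)]
        with x hx
      exact hprec hx.1 hvu' hx.2.le
    · exact hprec hv' (hv'.trans hvu') hvu
  have h1 := (div_le_div_iff₀ (hfpos v) (hfpos u)).1 main
  nlinarith [h1]

/-- the bracket appearing in the symmetrized kernel is nonnegative -/
lemma bracket_nonneg {fX : ℝ → ℝ} (hpos : ∀ x, 0 < fX x) (hsym : SymmAbout 0 fX)
    (hlc : LogConcaveFn fX) {s u v : ℝ} (hs : s ≤ 0) (hv : 0 ≤ v) (hvu : v ≤ u) :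
    0 ≤ (u - v) * (fX (s + u) * fX (s + v) - fX (s - u) * fX (s - v))
      + (u + v) * (fX (s + u) * fX (s - v) - fX (s - u) * fX (s + v)) := by
  have h1 := lc_pair_single hpos hsym hlc hs (hv.trans hvu)
  have h2 := lc_pair_single hpos hsym hlc hs hv
  have h3 := lc_pair_double hpos hsym hlc hs hv hvu
  have t1 : 0 ≤ (u - v) * (fX (s + u) * fX (s + v) - fX (s - u) * fX (s - v)) := by
    apply mul_nonneg (by linarith)
    have := mul_le_mul h1 h2 (hpos _).le (hpos _).le
    linarith
  have t2 : 0 ≤ (u + v) * (fX (s + u) * fX (s - v) - fX (s - u) * fX (s + v)) := by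
    apply mul_nonneg (by linarith) (by linarith)
  linarith

/-! ### The symmetrized kernel -/

def Sker (f g q : ℝ → ℝ) (u v : ℝ) : ℝ :=
  (f u * g v - g u * f v) *
    ((u - v) * (q u * q v - q (-u) * q (-v)) + (u + v) * (q u * q (-v) - q (-u) * q v))

lemma sum8_eq (f g q : ℝ → ℝ) (hfe : ∀ x, f (-x) = f x) (hge : ∀ x, g (-x) = g x) (u v : ℝ) :
    (u * q u * q v * (f u * g v - g u * f v))
    + ((-u) * q (-u) * q v * (f (-u) * g v - g (-u) * f v))
    + (u * q u * q (-v) * (f u * g (-v) - g u * f (-v)))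
    + ((-u) * q (-u) * q (-v) * (f (-u) * g (-v) - g (-u) * f (-v)))
    + (v * q v * q u * (f v * g u - g v * f u))
    + ((-v) * q (-v) * q u * (f (-v) * g u - g (-v) * f u))
    + (v * q v * q (-u) * (f v * g (-u) - g v * f (-u)))
    + ((-v) * q (-v) * q (-u) * (f (-v) * g (-u) - g (-v) * f (-u)))
    = Sker f g q u v := by
  simp only [Sker, hfe, hge]; ring

lemma Sker_nonpos (f g q : ℝ → ℝ) (hfe : ∀ x, f (-x) = f x) (hge : ∀ x, g (-x) = g x)
    (hP : ∀ u v : ℝ, 0 ≤ v → v ≤ u → f u * g v ≤ g u * f v)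
    (hB : ∀ u v : ℝ, 0 ≤ v → v ≤ u →
      0 ≤ (u - v) * (q u * q v - q (-u) * q (-v)) + (u + v) * (q u * q (-v) - q (-u) * q v))
    (u v : ℝ) : Sker f g q u v ≤ 0 := by
  have heu : ∀ a b : ℝ, Sker f g q (-a) b = Sker f g q a b := by
    intro a b; simp only [Sker, hfe, hge, neg_neg]; ring
  have hev : ∀ a b : ℝ, Sker f g q a (-b) = Sker f g q a b := by
    intro a b; simp only [Sker, hfe, hge, neg_neg]; ring
  have hswap : ∀ a b : ℝ, Sker f g q b a = Sker f g q a b := by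
    intro a b; simp only [Sker]; ring
  have key : ∀ a b : ℝ, 0 ≤ b → b ≤ a → Sker f g q a b ≤ 0 := by
    intro a b hb hba
    exact mul_nonpos_of_nonpos_of_nonneg (by linarith [hP a b hb hba]) (hB a b hb hba)
  have habs : Sker f g q u v = Sker f g q |u| |v| := by
    rcases abs_cases u with ⟨h, _⟩ | ⟨h, _⟩ <;> rcases abs_cases v with ⟨h2, _⟩ | ⟨h2, _⟩ <;>
      rw [h, h2] <;> simp only [heu, hev]
  rw [habs]
  rcases le_total |v| |u| with hc | hc
  · exact key _ _ (abs_nonneg v) hc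
  · rw [← hswap]; exact key _ _ (abs_nonneg u) hc
/-! ### Integrability helpers -/

lemma integrable_of_intEqOne {f : ℝ → ℝ} (h : (∫ x, f x) = 1) : Integrable f := by
  by_contra hc
  rw [integral_undef hc] at h
  norm_num at h

lemma den_pos {p h : ℝ → ℝ} (hp_pos : ∀ x, 0 < p x) (hh_pos : ∀ x, 0 < h x)
    (hint : Integrable (fun x => p x * h x)) : 0 < ∫ x, p x * h x := by
  rw [integral_pos_iff_support_of_nonneg_ae
    (Eventually.of_forall fun x => (mul_pos (hp_pos x) (hh_pos x)).le) hint]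
  have hsupp : Function.support (fun x => p x * h x) = univ := by
    ext x
    simp only [Function.mem_support, mem_univ, iff_true]
    exact (mul_pos (hp_pos x) (hh_pos x)).ne'
  rw [hsupp]
  simp [Real.volume_univ]

/-- Integrability of `x ↦ p x * h (s - x)` when `p` integrable and `h` bounded continuous. -/
lemma int_den {p h : ℝ → ℝ} (hp_int : Integrable p) (hp_pos : ∀ x, 0 < p x)
    (hp_cont : Continuous p) (hh_cont : Continuous h) (hh_pos : ∀ x, 0 < h x)
    (hhb : ∀ x, h x ≤ h 0) (s : ℝ) : Integrable (fun x => p x * h (s - x)) := by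
  refine (hp_int.mul_const (h 0)).mono'
    ((hp_cont.mul (hh_cont.comp (continuous_const.sub continuous_id))).aestronglyMeasurable)
    (Eventually.of_forall fun x => ?_)
  have : |p x * h (s - x)| = p x * h (s - x) := abs_of_pos (mul_pos (hp_pos x) (hh_pos _))
  rw [Real.norm_eq_abs, this]
  exact mul_le_mul_of_nonneg_left (hhb _) (hp_pos x).le

lemma int_num {p h : ℝ → ℝ} (hp_mom : Integrable (fun x => |x| * p x)) (hp_pos : ∀ x, 0 < p x)
    (hp_cont : Continuous p) (hh_cont : Continuous h) (hh_pos : ∀ x, 0 < h x)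
    (hhb : ∀ x, h x ≤ h 0) (s : ℝ) : Integrable (fun x => x * p x * h (s - x)) := by
  refine (hp_mom.mul_const (h 0)).mono'
    ((continuous_id.mul hp_cont |>.mul
      (hh_cont.comp (continuous_const.sub continuous_id))).aestronglyMeasurable)
    (Eventually.of_forall fun x => ?_)
  rw [Real.norm_eq_abs, abs_mul, abs_mul, abs_of_pos (hp_pos x), abs_of_pos (hh_pos _)]
  exact mul_le_mul_of_nonneg_left (hhb _) (mul_nonneg (abs_nonneg x) (hp_pos x).le)

/-! ### The core comparison in centered coordinates -/

section Core

variable {fc f g : ℝ → ℝ}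

/-- Core 2D inequality: with `q u = fc (t + u)`,
`(∫ u q u f u)·(∫ q g) ≥`-type comparison of first moments. -/
lemma core_M_le
    (hfc_pos : ∀ x, 0 < fc x) (hfc_cont : Continuous fc) (hfc_even : ∀ x, fc (-x) = fc x)
    (hfc_lc : LogConcaveFn fc)
    (hfc_int : Integrable fc) (hfc_mom : Integrable (fun x => |x| * fc x))
    (hf_pos : ∀ x, 0 < f x) (hf_cont : Continuous f) (hf_even : ∀ x, f (-x) = f x)
    (hg_pos : ∀ x, 0 < g x) (hg_cont : Continuous g) (hg_even : ∀ x, g (-x) = g x)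
    (hfb : ∀ x, f x ≤ f 0) (hgb : ∀ x, g x ≤ g 0)
    (hP : ∀ u v : ℝ, 0 ≤ v → v ≤ u → f u * g v ≤ g u * f v)
    {t : ℝ} (ht : t ≤ 0) :
    (∫ u, u * fc (t + u) * f u) * (∫ u, fc (t + u) * g u)
      ≤ (∫ u, u * fc (t + u) * g u) * (∫ u, fc (t + u) * f u) := by
  set q : ℝ → ℝ := fun u => fc (t + u) with hq
  have hq_pos : ∀ u, 0 < q u := fun u => hfc_pos _
  have hq_cont : Continuous q := hfc_cont.comp (continuous_const.add continuous_id)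
  have hq_int : Integrable q := hfc_int.comp_add_left t
  have hq_mom : Integrable (fun u => |u| * q u) := by
    have base : Integrable (fun u => |t + u| * fc (t + u) + |t| * fc (t + u)) := by
      have h0 : Integrable (fun x => |x| * fc x + |t| * fc x) :=
        hfc_mom.add (hfc_int.const_mul |t|)
      exact h0.comp_add_left t
    refine base.mono'
      ((continuous_abs.mul hq_cont).aestronglyMeasurable)
      (Eventually.of_forall fun u => ?_)
    rw [Real.norm_eq_abs, abs_mul, abs_abs, abs_of_pos (hq_pos u)]
    have habs : |u| ≤ |t + u| + |t| := by
      have : |u| = |(t + u) + (-t)| := by norm_num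
      rw [this]
      calc |(t + u) + (-t)| ≤ |t + u| + |(-t)| := abs_add_le _ _
        _ = |t + u| + |t| := by rw [abs_neg]
    calc |u| * q u ≤ (|t + u| + |t|) * q u :=
          mul_le_mul_of_nonneg_right habs (hq_pos u).le
      _ = |t + u| * fc (t + u) + |t| * fc (t + u) := by rw [hq]; ring
  -- integrability of the four 1D pieces
  have mkI1 : ∀ h : ℝ → ℝ, Continuous h → (∀ x, 0 < h x) → (∀ x, h x ≤ h 0) →
      Integrable (fun u => q u * h u) := by
    intro h hc hpos hb
    refine (hq_int.mul_const (h 0)).mono' ((hq_cont.mul hc).aestronglyMeasurable)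
      (Eventually.of_forall fun u => ?_)
    rw [Real.norm_eq_abs, abs_mul, abs_of_pos (hq_pos u), abs_of_pos (hpos u)]
    exact mul_le_mul_of_nonneg_left (hb u) (hq_pos u).le
  have mkI2 : ∀ h : ℝ → ℝ, Continuous h → (∀ x, 0 < h x) → (∀ x, h x ≤ h 0) →
      Integrable (fun u => u * q u * h u) := by
    intro h hc hpos hb
    refine (hq_mom.mul_const (h 0)).mono'
      (((continuous_id.mul hq_cont).mul hc).aestronglyMeasurable)
      (Eventually.of_forall fun u => ?_)
    rw [Real.norm_eq_abs, abs_mul, abs_mul, abs_of_pos (hq_pos u), abs_of_pos (hpos u)]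
    exact mul_le_mul_of_nonneg_left (hb u) (mul_nonneg (abs_nonneg u) (hq_pos u).le)
  have Iqf := mkI1 f hf_cont hf_pos hfb
  have Iqg := mkI1 g hg_cont hg_pos hgb
  have Iuqf := mkI2 f hf_cont hf_pos hfb
  have Iuqg := mkI2 g hg_cont hg_pos hgb
  -- the 2D setting
  set μ2 : Measure (ℝ × ℝ) := (volume : Measure ℝ).prod volume with hμ2
  set Φ : ℝ × ℝ → ℝ :=
    fun z => z.1 * q z.1 * q z.2 * (f z.1 * g z.2 - g z.1 * f z.2) with hΦ
  have hΦsplit : ∀ z : ℝ × ℝ,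
      (fun w : ℝ × ℝ => (w.1 * q w.1 * f w.1) * (q w.2 * g w.2)) z
      - (fun w : ℝ × ℝ => (w.1 * q w.1 * g w.1) * (q w.2 * f w.2)) z = Φ z := by
    intro z; simp only [hΦ]; ring
  have I1 : Integrable (fun w : ℝ × ℝ => (w.1 * q w.1 * f w.1) * (q w.2 * g w.2)) μ2 :=
    Iuqf.mul_prod Iqg
  have I2 : Integrable (fun w : ℝ × ℝ => (w.1 * q w.1 * g w.1) * (q w.2 * f w.2)) μ2 :=
    Iuqg.mul_prod Iqf
  have hΦint : Integrable Φ μ2 :=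
    (I1.sub I2).congr (Eventually.of_forall hΦsplit)
  have hT : ∫ z, Φ z ∂μ2
      = (∫ u, u * q u * f u) * (∫ u, q u * g u)
        - (∫ u, u * q u * g u) * (∫ u, q u * f u) := by
    have P1 : ∫ z : ℝ × ℝ, (z.1 * q z.1 * f z.1) * (q z.2 * g z.2) ∂((volume : Measure ℝ).prod volume)
        = (∫ u, u * q u * f u) * ∫ v, q v * g v :=
      integral_prod_mul (f := fun u => u * q u * f u) (g := fun v => q v * g v)
    have P2 : ∫ z : ℝ × ℝ, (z.1 * q z.1 * g z.1) * (q z.2 * f z.2) ∂((volume : Measure ℝ).prod volume)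
        = (∫ u, u * q u * g u) * ∫ v, q v * f v :=
      integral_prod_mul (f := fun u => u * q u * g u) (g := fun v => q v * f v)
    rw [← integral_congr_ae (Eventually.of_forall hΦsplit)]
    rw [integral_sub I1 I2, hμ2, P1, P2]
  -- measure preserving maps
  have mpneg : MeasurePreserving (fun x : ℝ => -x) volume volume :=
    Measure.measurePreserving_neg volume
  have embneg : MeasurableEmbedding (fun x : ℝ => -x) :=
    (Homeomorph.neg ℝ).measurableEmbedding
  have mpid : MeasurePreserving (id : ℝ → ℝ) volume volume := MeasurePreserving.id _
  have embid : MeasurableEmbedding (id : ℝ → ℝ) := MeasurableEmbedding.id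
  have mpsw : MeasurePreserving (Prod.swap : ℝ × ℝ → ℝ × ℝ) μ2 μ2 :=
    Measure.measurePreserving_swap
  have embsw : MeasurableEmbedding (Prod.swap : ℝ × ℝ → ℝ × ℝ) :=
    (MeasurableEquiv.prodComm (α := ℝ) (β := ℝ)).measurableEmbedding
  have mpa : MeasurePreserving (fun z : ℝ × ℝ => (-z.1, z.2)) μ2 μ2 := mpneg.prod mpid
  have emba : MeasurableEmbedding (fun z : ℝ × ℝ => (-z.1, z.2)) :=
    MeasurableEmbedding.prodMap embneg embid
  have mpb : MeasurePreserving (fun z : ℝ × ℝ => (z.1, -z.2)) μ2 μ2 := mpid.prod mpneg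
  have embb : MeasurableEmbedding (fun z : ℝ × ℝ => (z.1, -z.2)) :=
    MeasurableEmbedding.prodMap embid embneg
  have mpc : MeasurePreserving (fun z : ℝ × ℝ => (-z.1, -z.2)) μ2 μ2 := mpneg.prod mpneg
  have embc : MeasurableEmbedding (fun z : ℝ × ℝ => (-z.1, -z.2)) :=
    MeasurableEmbedding.prodMap embneg embneg
  -- composite maps with swap
  have mpd : MeasurePreserving (fun z : ℝ × ℝ => (-z.2, z.1)) μ2 μ2 := mpa.comp mpsw
  have embd : MeasurableEmbedding (fun z : ℝ × ℝ => (-z.2, z.1)) := emba.comp embsw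
  have mpe : MeasurePreserving (fun z : ℝ × ℝ => (z.2, -z.1)) μ2 μ2 := mpb.comp mpsw
  have embe : MeasurableEmbedding (fun z : ℝ × ℝ => (z.2, -z.1)) := embb.comp embsw
  have mpf' : MeasurePreserving (fun z : ℝ × ℝ => (-z.2, -z.1)) μ2 μ2 := mpc.comp mpsw
  have embf' : MeasurableEmbedding (fun z : ℝ × ℝ => (-z.2, -z.1)) := embc.comp embsw
  -- the eight integrals agree
  set T : ℝ := ∫ z, Φ z ∂μ2 with hTdef
  have E1 : ∫ z : ℝ × ℝ, Φ (-z.1, z.2) ∂μ2 = T := mpa.integral_comp emba Φ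
  have E2 : ∫ z : ℝ × ℝ, Φ (z.1, -z.2) ∂μ2 = T := mpb.integral_comp embb Φ
  have E3 : ∫ z : ℝ × ℝ, Φ (-z.1, -z.2) ∂μ2 = T := mpc.integral_comp embc Φ
  have E4 : ∫ z : ℝ × ℝ, Φ (z.2, z.1) ∂μ2 = T := mpsw.integral_comp embsw Φ
  have E5 : ∫ z : ℝ × ℝ, Φ (-z.2, z.1) ∂μ2 = T := mpd.integral_comp embd Φ
  have E6 : ∫ z : ℝ × ℝ, Φ (z.2, -z.1) ∂μ2 = T := mpe.integral_comp embe Φ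
  have E7 : ∫ z : ℝ × ℝ, Φ (-z.2, -z.1) ∂μ2 = T := mpf'.integral_comp embf' Φ
  have J1 : Integrable (fun z : ℝ × ℝ => Φ (-z.1, z.2)) μ2 :=
    (mpa.integrable_comp_emb emba (g := Φ)).2 hΦint
  have J2 : Integrable (fun z : ℝ × ℝ => Φ (z.1, -z.2)) μ2 :=
    (mpb.integrable_comp_emb embb (g := Φ)).2 hΦint
  have J3 : Integrable (fun z : ℝ × ℝ => Φ (-z.1, -z.2)) μ2 :=
    (mpc.integrable_comp_emb embc (g := Φ)).2 hΦint
  have J4 : Integrable (fun z : ℝ × ℝ => Φ (z.2, z.1)) μ2 :=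
    (mpsw.integrable_comp_emb embsw (g := Φ)).2 hΦint
  have J5 : Integrable (fun z : ℝ × ℝ => Φ (-z.2, z.1)) μ2 :=
    (mpd.integrable_comp_emb embd (g := Φ)).2 hΦint
  have J6 : Integrable (fun z : ℝ × ℝ => Φ (z.2, -z.1)) μ2 :=
    (mpe.integrable_comp_emb embe (g := Φ)).2 hΦint
  have J7 : Integrable (fun z : ℝ × ℝ => Φ (-z.2, -z.1)) μ2 :=
    (mpf'.integrable_comp_emb embf' (g := Φ)).2 hΦint
  -- sum of the eight compositions
  have hsplit : ∫ z : ℝ × ℝ, (Φ z + (Φ (-z.1, z.2) + (Φ (z.1, -z.2) + (Φ (-z.1, -z.2)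
      + (Φ (z.2, z.1) + (Φ (-z.2, z.1) + (Φ (z.2, -z.1) + Φ (-z.2, -z.1)))))))) ∂μ2
      = 8 * T := by
    have K6 : Integrable (fun z : ℝ × ℝ => Φ (z.2, -z.1) + Φ (-z.2, -z.1)) μ2 := J6.add J7
    have K5 : Integrable (fun z : ℝ × ℝ => Φ (-z.2, z.1) + (Φ (z.2, -z.1) + Φ (-z.2, -z.1))) μ2 :=
      J5.add K6
    have K4 : Integrable (fun z : ℝ × ℝ => Φ (z.2, z.1)
        + (Φ (-z.2, z.1) + (Φ (z.2, -z.1) + Φ (-z.2, -z.1)))) μ2 := J4.add K5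
    have K3 : Integrable (fun z : ℝ × ℝ => Φ (-z.1, -z.2)
        + (Φ (z.2, z.1) + (Φ (-z.2, z.1) + (Φ (z.2, -z.1) + Φ (-z.2, -z.1))))) μ2 := J3.add K4
    have K2 : Integrable (fun z : ℝ × ℝ => Φ (z.1, -z.2) + (Φ (-z.1, -z.2)
        + (Φ (z.2, z.1) + (Φ (-z.2, z.1) + (Φ (z.2, -z.1) + Φ (-z.2, -z.1)))))) μ2 := J2.add K3
    have K1 : Integrable (fun z : ℝ × ℝ => Φ (-z.1, z.2) + (Φ (z.1, -z.2) + (Φ (-z.1, -z.2)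
        + (Φ (z.2, z.1) + (Φ (-z.2, z.1) + (Φ (z.2, -z.1) + Φ (-z.2, -z.1))))))) μ2 := J1.add K2
    rw [integral_add hΦint K1, integral_add J1 K2, integral_add J2 K3, integral_add J3 K4,
      integral_add J4 K5, integral_add J5 K6, integral_add J6 J7]
    rw [E1, E2, E3, E4, E5, E6, E7]
    ring
  have hptwise : ∀ z : ℝ × ℝ, Φ z + (Φ (-z.1, z.2) + (Φ (z.1, -z.2) + (Φ (-z.1, -z.2)
      + (Φ (z.2, z.1) + (Φ (-z.2, z.1) + (Φ (z.2, -z.1) + Φ (-z.2, -z.1))))))) ≤ 0 := by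
    intro z
    have hB : ∀ u v : ℝ, 0 ≤ v → v ≤ u →
        0 ≤ (u - v) * (q u * q v - q (-u) * q (-v)) + (u + v) * (q u * q (-v) - q (-u) * q v) := by
      intro u v hv hvu
      have := bracket_nonneg hfc_pos
        (by intro x; simp [hfc_even x] : SymmAbout 0 fc) hfc_lc ht hv hvu
      simpa [hq, sub_eq_add_neg, add_comm, add_left_comm] using this
    have hS := Sker_nonpos f g q hf_even hg_even hP hB z.1 z.2
    have hE := sum8_eq f g q hf_even hg_even z.1 z.2
    simp only [hΦ]
    linarith [hE, hS]
  have hTle : 8 * T ≤ 0 := by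
    rw [← hsplit]
    apply integral_nonpos
    intro z
    exact hptwise z
  have : T ≤ 0 := by linarith
  rw [hT] at this
  linarith

end Core
/-! ### 1D substitution and sign lemmas -/

section OneD

variable {p h : ℝ → ℝ}

lemma subst_den (hh_even : ∀ x, h (-x) = h x) (t : ℝ) :
    ∫ x, p x * h (t - x) = ∫ u, p (t + u) * h u := by
  calc ∫ x, p x * h (t - x) = ∫ u, p (t + u) * h (t - (t + u)) :=
        (integral_add_left_eq_self (fun x => p x * h (t - x)) t).symm
    _ = ∫ u, p (t + u) * h u := by
        refine integral_congr_ae (Eventually.of_forall fun u => ?_)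
        dsimp only
        rw [show t - (t + u) = -u by ring, hh_even]

lemma subst_num (hh_even : ∀ x, h (-x) = h x) (t : ℝ)
    (h1 : Integrable (fun u => p (t + u) * h u))
    (h2 : Integrable (fun u => u * p (t + u) * h u)) :
    ∫ x, x * p x * h (t - x)
      = t * (∫ u, p (t + u) * h u) + ∫ u, u * p (t + u) * h u := by
  calc ∫ x, x * p x * h (t - x) = ∫ u, (t + u) * p (t + u) * h (t - (t + u)) :=
        (integral_add_left_eq_self (fun x => x * p x * h (t - x)) t).symm
    _ = ∫ u, (t * (p (t + u) * h u) + u * p (t + u) * h u) := by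
        refine integral_congr_ae (Eventually.of_forall fun u => ?_)
        dsimp only
        rw [show t - (t + u) = -u by ring, hh_even]; ring
    _ = t * (∫ u, p (t + u) * h u) + ∫ u, u * p (t + u) * h u := by
        rw [integral_add (h1.const_mul t) h2, integral_const_mul]

lemma den_even_arg (hp_even : ∀ x, p (-x) = p x) (hh_even : ∀ x, h (-x) = h x) (t : ℝ) :
    ∫ x, p x * h (-t - x) = ∫ x, p x * h (t - x) := by
  calc ∫ x, p x * h (-t - x) = ∫ x, p (-x) * h (-t - -x) :=
        (integral_neg_eq_self (fun x => p x * h (-t - x)) volume).symm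
    _ = ∫ x, p x * h (t - x) := by
        refine integral_congr_ae (Eventually.of_forall fun x => ?_)
        dsimp only
        rw [hp_even, show -t - -x = -(t - x) by ring, hh_even]

lemma num_odd_arg (hp_even : ∀ x, p (-x) = p x) (hh_even : ∀ x, h (-x) = h x) (t : ℝ) :
    ∫ x, x * p x * h (-t - x) = - ∫ x, x * p x * h (t - x) := by
  calc ∫ x, x * p x * h (-t - x) = ∫ x, (-x) * p (-x) * h (-t - -x) :=
        (integral_neg_eq_self (fun x => x * p x * h (-t - x)) volume).symm
    _ = ∫ x, -(x * p x * h (t - x)) := by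
        refine integral_congr_ae (Eventually.of_forall fun x => ?_)
        dsimp only
        rw [hp_even, show -t - -x = -(t - x) by ring, hh_even]; ring
    _ = - ∫ x, x * p x * h (t - x) := integral_neg _

/-- the posterior numerator is nonpositive left of the prior center -/
lemma num_nonpos (hp_pos : ∀ x, 0 < p x) (hp_even : ∀ x, p (-x) = p x)
    (hh_pos : ∀ x, 0 < h x)
    (hanti : ∀ x y : ℝ, |x| ≤ |y| → h y ≤ h x)
    {t : ℝ} (ht : t ≤ 0)
    (hint : Integrable (fun x => x * p x * h (t - x))) :
    ∫ x, x * p x * h (t - x) ≤ 0 := by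
  set F : ℝ → ℝ := fun x => x * p x * h (t - x) with hF
  have hIFn : Integrable (fun x => F (-x)) := hint.comp_neg
  have h2 : (2:ℝ) * ∫ x, F x = ∫ x, (F x + F (-x)) := by
    rw [integral_add hint hIFn, integral_neg_eq_self]; ring
  have hpt : ∀ x : ℝ, F x + F (-x) ≤ 0 := by
    intro x
    have he : F x + F (-x) = x * p x * (h (t - x) - h (t + x)) := by
      simp only [hF]
      rw [hp_even, show t - -x = t + x by ring]; ring
    rw [he]
    rcases le_total 0 x with hx | hx
    · have hcmp : h (t - x) ≤ h (t + x) := by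
        apply hanti
        have h1 : |t - x| = x - t := by rw [abs_of_nonpos (by linarith)]; ring
        rw [h1, abs_le]; constructor <;> linarith
      have : (0:ℝ) ≤ x * p x := mul_nonneg hx (hp_pos x).le
      nlinarith
    · have hcmp : h (t + x) ≤ h (t - x) := by
        apply hanti
        have h1 : |t + x| = -(t + x) := abs_of_nonpos (by linarith)
        rw [h1, abs_le]; constructor <;> linarith
      have : x * p x ≤ 0 := mul_nonpos_of_nonpos_of_nonneg hx (hp_pos x).le
      nlinarith
  have : ∫ x, (F x + F (-x)) ≤ 0 := integral_nonpos hpt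
  linarith

end OneD
/-! ### More integrability helpers (substituted forms) -/

lemma int_qh {p h : ℝ → ℝ} (hp_int : Integrable p) (hp_pos : ∀ x, 0 < p x)
    (hp_cont : Continuous p) (hh_cont : Continuous h) (hh_pos : ∀ x, 0 < h x)
    (hhb : ∀ x, h x ≤ h 0) (t : ℝ) : Integrable (fun u => p (t + u) * h u) := by
  have hq_int : Integrable (fun u => p (t + u)) := hp_int.comp_add_left t
  refine (hq_int.mul_const (h 0)).mono'
    (((hp_cont.comp (continuous_const.add continuous_id)).mul hh_cont).aestronglyMeasurable)
    (Eventually.of_forall fun u => ?_)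
  rw [Real.norm_eq_abs, abs_mul, abs_of_pos (hp_pos _), abs_of_pos (hh_pos u)]
  exact mul_le_mul_of_nonneg_left (hhb u) (hp_pos _).le

lemma int_uqh {p h : ℝ → ℝ} (hp_int : Integrable p)
    (hp_mom : Integrable (fun x => |x| * p x)) (hp_pos : ∀ x, 0 < p x)
    (hp_cont : Continuous p) (hh_cont : Continuous h) (hh_pos : ∀ x, 0 < h x)
    (hhb : ∀ x, h x ≤ h 0) (t : ℝ) : Integrable (fun u => u * p (t + u) * h u) := by
  have hq_cont : Continuous (fun u => p (t + u)) :=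
    hp_cont.comp (continuous_const.add continuous_id)
  have hq_mom : Integrable (fun u => |u| * p (t + u)) := by
    have base : Integrable (fun u => |t + u| * p (t + u) + |t| * p (t + u)) := by
      have h0 : Integrable (fun x => |x| * p x + |t| * p x) :=
        hp_mom.add (hp_int.const_mul |t|)
      exact h0.comp_add_left t
    refine base.mono' ((continuous_abs.mul hq_cont).aestronglyMeasurable)
      (Eventually.of_forall fun u => ?_)
    rw [Real.norm_eq_abs, abs_mul, abs_abs, abs_of_pos (hp_pos _)]
    have habs : |u| ≤ |t + u| + |t| := by
      calc |u| = |(t + u) + (-t)| := by norm_num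
        _ ≤ |t + u| + |(-t)| := abs_add_le _ _
        _ = |t + u| + |t| := by rw [abs_neg]
    calc |u| * p (t + u) ≤ (|t + u| + |t|) * p (t + u) :=
          mul_le_mul_of_nonneg_right habs (hp_pos _).le
      _ = |t + u| * p (t + u) + |t| * p (t + u) := by ring
  refine (hq_mom.mul_const (h 0)).mono'
    (((continuous_id.mul hq_cont).mul hh_cont).aestronglyMeasurable)
    (Eventually.of_forall fun u => ?_)
  rw [Real.norm_eq_abs, abs_mul, abs_mul, abs_of_pos (hp_pos _), abs_of_pos (hh_pos u)]
  exact mul_le_mul_of_nonneg_left (hhb u) (mul_nonneg (abs_nonneg u) (hp_pos _).le)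

/-! ### Main theorem -/

/-- Theorem 1 (sufficiency): imprecision attenuates updating. -/
theorem imprecision_attenuates_updating
    (fX f g : ℝ → ℝ) (μ : ℝ)
    (hfX : IsDensity fX) (hfXsym : SymmAbout μ fX) (hfXlc : LogConcaveFn fX)
    (hμ : μ = ∫ x, x * fX x)
    (hf : IsDensity f) (hfsym : SymmAbout 0 f) (hfqc : QuasiConcaveFn f)
    (hg : IsDensity g) (hgsym : SymmAbout 0 g) (hgqc : QuasiConcaveFn g)
    (hprec : LessPrecise g f) :
    (∀ s ≤ μ, postMean fX f s ≤ postMean fX g s ∧ postMean fX g s ≤ μ) ∧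
    (∀ s, μ ≤ s → μ ≤ postMean fX g s ∧ postMean fX g s ≤ postMean fX f s) := by
  obtain ⟨hfX_pos, hfX_cd, hfX_one, hfX_mom⟩ := hfX
  have hfX_cont : Continuous fX := hfX_cd.continuous
  have hfX_int : Integrable fX := integrable_of_intEqOne hfX_one
  -- the centered prior
  set p : ℝ → ℝ := fun x => fX (x + μ) with hp
  have hp_pos : ∀ x, 0 < p x := fun x => hfX_pos _
  have hp_cont : Continuous p := hfX_cont.comp (continuous_id.add continuous_const)
  have hp_even : ∀ x, p (-x) = p x := by
    intro x
    simp only [hp]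
    rw [show -x + μ = μ - x by ring, ← hfXsym x, show μ + x = x + μ by ring]
  have hp_lc : LogConcaveFn p := by
    refine ⟨convex_univ, ?_⟩
    intro x _ y _ a b ha hb hab
    have key := hfXlc.2 (mem_univ (x + μ)) (mem_univ (y + μ)) ha hb hab
    simp only [smul_eq_mul] at key ⊢
    show a * Real.log (fX (x + μ)) + b * Real.log (fX (y + μ))
      ≤ Real.log (fX (a * x + b * y + μ))
    rw [show a * x + b * y + μ = a * (x + μ) + b * (y + μ) by linear_combination (-μ) * hab]
    exact key
  have hp_int : Integrable p := hfX_int.comp_add_right μ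
  have hp_mom : Integrable (fun x => |x| * p x) := by
    have base : Integrable (fun x => |x + μ| * fX (x + μ) + |μ| * fX (x + μ)) := by
      have h0 : Integrable (fun x => |x| * fX x + |μ| * fX x) :=
        hfX_mom.add (hfX_int.const_mul |μ|)
      exact h0.comp_add_right μ
    refine base.mono' ((continuous_abs.mul hp_cont).aestronglyMeasurable)
      (Eventually.of_forall fun x => ?_)
    rw [Real.norm_eq_abs, abs_mul, abs_abs, abs_of_pos (hp_pos x)]
    have habs : |x| ≤ |x + μ| + |μ| := by
      calc |x| = |(x + μ) + (-μ)| := by norm_num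
        _ ≤ |x + μ| + |(-μ)| := abs_add_le _ _
        _ = |x + μ| + |μ| := by rw [abs_neg]
    calc |x| * p x ≤ (|x + μ| + |μ|) * p x :=
          mul_le_mul_of_nonneg_right habs (hp_pos x).le
      _ = |x + μ| * fX (x + μ) + |μ| * fX (x + μ) := by simp only [hp]; ring
  -- noise density properties
  have hf_pos := hf.1
  have hg_pos := hg.1
  have hf_cont : Continuous f := hf.2.1.continuous
  have hg_cont : Continuous g := hg.2.1.continuous
  have hf_even := symm0_even hfsym
  have hg_even := symm0_even hgsym
  have hf_anti := qc_anti hfsym hfqc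
  have hg_anti := qc_anti hgsym hgqc
  have hfb : ∀ x, f x ≤ f 0 := fun x => hf_anti 0 x (by simp)
  have hgb : ∀ x, g x ≤ g 0 := fun x => hg_anti 0 x (by simp)
  have hP : ∀ u v : ℝ, 0 ≤ v → v ≤ u → f u * g v ≤ g u * f v :=
    fun u v hv hvu => ratio_le hf_pos hf_cont hg_cont hprec hv hvu
  -- key facts packaged for each noise density
  have pack : ∀ h : ℝ → ℝ, (∀ x, 0 < h x) → Continuous h → (∀ x, h (-x) = h x) →
      (∀ x, h x ≤ h 0) → ∀ s : ℝ,
      (0 < ∫ x, p x * h ((s - μ) - x)) ∧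
      postMean fX h s
        = (∫ x, x * p x * h ((s - μ) - x)) / (∫ x, p x * h ((s - μ) - x)) + μ := by
    intro h hh_pos hh_cont hh_even hhb s
    have Iden : Integrable (fun x => p x * h ((s - μ) - x)) :=
      int_den hp_int hp_pos hp_cont hh_cont hh_pos hhb (s - μ)
    have Inum : Integrable (fun x => x * p x * h ((s - μ) - x)) :=
      int_num hp_mom hp_pos hp_cont hh_cont hh_pos hhb (s - μ)
    have hD : 0 < ∫ x, p x * h ((s - μ) - x) :=
      den_pos hp_pos (fun x => hh_pos _) Iden
    refine ⟨hD, ?_⟩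
    have tden : ∫ x, fX x * h (s - x) = ∫ x, p x * h ((s - μ) - x) := by
      calc ∫ x, fX x * h (s - x) = ∫ x, fX (x + μ) * h (s - (x + μ)) :=
            (integral_add_right_eq_self (fun x => fX x * h (s - x)) μ).symm
        _ = ∫ x, p x * h ((s - μ) - x) := by
            refine integral_congr_ae (Eventually.of_forall fun x => ?_)
            dsimp only
            rw [show s - (x + μ) = (s - μ) - x by ring]
    have tnum : ∫ x, x * fX x * h (s - x)
        = (∫ x, x * p x * h ((s - μ) - x)) + μ * ∫ x, p x * h ((s - μ) - x) := by
      calc ∫ x, x * fX x * h (s - x) = ∫ x, (x + μ) * fX (x + μ) * h (s - (x + μ)) :=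
            (integral_add_right_eq_self (fun x => x * fX x * h (s - x)) μ).symm
        _ = ∫ x, (x * p x * h ((s - μ) - x) + μ * (p x * h ((s - μ) - x))) := by
            refine integral_congr_ae (Eventually.of_forall fun x => ?_)
            dsimp only
            rw [show s - (x + μ) = (s - μ) - x by ring]; ring
        _ = (∫ x, x * p x * h ((s - μ) - x)) + μ * ∫ x, p x * h ((s - μ) - x) := by
            rw [integral_add Inum (Iden.const_mul μ), integral_const_mul]
    rw [postMean, tden, tnum, add_div, mul_div_assoc, div_self hD.ne', mul_one]
  -- sign of the numerator left of center
  have sign : ∀ h : ℝ → ℝ, (∀ x, 0 < h x) → Continuous h → (∀ x, h (-x) = h x) →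
      (∀ x y : ℝ, |x| ≤ |y| → h y ≤ h x) → (∀ x, h x ≤ h 0) →
      ∀ t : ℝ, t ≤ 0 → (∫ x, x * p x * h (t - x)) ≤ 0 := by
    intro h hh_pos hh_cont hh_even hanti hhb t ht
    exact num_nonpos hp_pos hp_even hh_pos hanti ht
      (int_num hp_mom hp_pos hp_cont hh_cont hh_pos hhb t)
  -- the cross comparison left of center
  have cross : ∀ t : ℝ, t ≤ 0 →
      (∫ x, x * p x * f (t - x)) * (∫ x, p x * g (t - x))
        ≤ (∫ x, x * p x * g (t - x)) * (∫ x, p x * f (t - x)) := by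
    intro t ht
    rw [subst_num hf_even t (int_qh hp_int hp_pos hp_cont hf_cont hf_pos hfb t)
        (int_uqh hp_int hp_mom hp_pos hp_cont hf_cont hf_pos hfb t),
      subst_num hg_even t (int_qh hp_int hp_pos hp_cont hg_cont hg_pos hgb t)
        (int_uqh hp_int hp_mom hp_pos hp_cont hg_cont hg_pos hgb t),
      subst_den hf_even t, subst_den hg_even t]
    have hM := core_M_le hp_pos hp_cont hp_even hp_lc hp_int hp_mom
      hf_pos hf_cont hf_even hg_pos hg_cont hg_even hfb hgb hP ht
    nlinarith [hM]
  constructor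
  · -- s ≤ μ
    intro s hs
    have ht : s - μ ≤ 0 := by linarith
    obtain ⟨hDf, hEf⟩ := pack f hf_pos hf_cont hf_even hfb s
    obtain ⟨hDg, hEg⟩ := pack g hg_pos hg_cont hg_even hgb s
    have hNg := sign g hg_pos hg_cont hg_even hg_anti hgb (s - μ) ht
    have hcmp : (∫ x, x * p x * f ((s - μ) - x)) / (∫ x, p x * f ((s - μ) - x))
        ≤ (∫ x, x * p x * g ((s - μ) - x)) / (∫ x, p x * g ((s - μ) - x)) := by
      rw [div_le_div_iff₀ hDf hDg]
      exact cross (s - μ) ht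
    constructor
    · rw [hEf, hEg]; linarith
    · rw [hEg]
      have : (∫ x, x * p x * g ((s - μ) - x)) / (∫ x, p x * g ((s - μ) - x)) ≤ 0 :=
        div_nonpos_of_nonpos_of_nonneg hNg hDg.le
      linarith
  · -- μ ≤ s
    intro s hs
    have ht : μ - s ≤ 0 := by linarith
    obtain ⟨hDf, hEf⟩ := pack f hf_pos hf_cont hf_even hfb s
    obtain ⟨hDg, hEg⟩ := pack g hg_pos hg_cont hg_even hgb s
    -- oddness relations
    have oddf := num_odd_arg (p := p) (h := f) hp_even hf_even (μ - s)
    have oddg := num_odd_arg (p := p) (h := g) hp_even hg_even (μ - s)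
    have evenf := den_even_arg (p := p) (h := f) hp_even hf_even (μ - s)
    have eveng := den_even_arg (p := p) (h := g) hp_even hg_even (μ - s)
    rw [show -(μ - s) = s - μ by ring] at oddf oddg evenf eveng
    have hNg := sign g hg_pos hg_cont hg_even hg_anti hgb (μ - s) ht
    have hNf := sign f hf_pos hf_cont hf_even hf_anti hfb (μ - s) ht
    have hcross := cross (μ - s) ht
    have hDf' : 0 < ∫ x, p x * f ((μ - s) - x) := by rw [← evenf]; exact hDf
    have hDg' : 0 < ∫ x, p x * g ((μ - s) - x) := by rw [← eveng]; exact hDg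
    constructor
    · rw [hEg, eveng, oddg]
      have : 0 ≤ (- ∫ x, x * p x * g ((μ - s) - x)) / (∫ x, p x * g ((μ - s) - x)) :=
        div_nonneg (by linarith) hDg'.le
      linarith
    · rw [hEf, hEg, evenf, eveng, oddf, oddg]
      have hcmp : (- ∫ x, x * p x * g ((μ - s) - x)) / (∫ x, p x * g ((μ - s) - x))
          ≤ (- ∫ x, x * p x * f ((μ - s) - x)) / (∫ x, p x * f ((μ - s) - x)) := by
        rw [div_le_div_iff₀ hDg' hDf']
        nlinarith [hcross]
      linarith
end
end

section
/- Necessity of the precision order (Theorem 1, necessity). Let f and g be quasi-concave densities symmetric about 0 such that g is NOT less precise than f, i.e., the ratio x ↦ g(x)/f(x) is not nondecreasing on (0,∞). Then there exist a log-concave density f_X symmetric about 0 (so the prior mean is 0) and a signal realization s > 0 such that E_g[X|S=s] > E_f[X|S=s], where E_h[X|S=s] denotes the posterior mean under prior f_X and noise density h; that is, the attenuation ordering of Theorem 1 is violated. -/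
open MeasureTheory Real Set

noncomputable section

open Filter Topology

namespace PrecisionAux


lemma tendsto_sqrt_atTop' : Tendsto Real.sqrt atTop atTop := by
  rw [tendsto_atTop_atTop]
  intro b
  refine ⟨max (b ^ 2) 0, fun t ht => ?_⟩
  calc b ≤ |b| := le_abs_self b
    _ = Real.sqrt (b ^ 2) := (Real.sqrt_sq_eq_abs b).symm
    _ ≤ Real.sqrt t := Real.sqrt_le_sqrt ((le_max_left _ _).trans ht)

lemma integrable_sq_gauss : Integrable fun u : ℝ => u ^ 2 * Real.exp (-u ^ 2) := by
  have h := integrable_rpow_mul_exp_neg_mul_sq (b := 1) one_pos (s := 2) (by norm_num)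
  have h2 : ∀ x : ℝ, x ^ (2:ℝ) = x ^ 2 := fun x => by
    rw [show (2:ℝ) = ((2:ℕ):ℝ) by norm_num, Real.rpow_natCast]
  simpa [h2] using h

lemma integrable_gauss : Integrable fun u : ℝ => Real.exp (-u ^ 2) := by
  simpa using integrable_exp_neg_mul_sq (b := 1) one_pos

lemma integrable_lin_gauss : Integrable fun u : ℝ => u * Real.exp (-u ^ 2) := by
  simpa using integrable_mul_exp_neg_mul_sq (b := 1) one_pos

lemma int_lin_gauss_zero : (∫ u : ℝ, u * Real.exp (-u ^ 2)) = 0 := by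
  have h := integral_neg_eq_self (fun u : ℝ => u * Real.exp (-u ^ 2)) (volume : Measure ℝ)
  simp only [neg_sq, neg_mul] at h
  rw [integral_neg] at h
  linarith

lemma int_sq_gauss_pos : 0 < ∫ u : ℝ, u ^ 2 * Real.exp (-u ^ 2) := by
  rw [integral_pos_iff_support_of_nonneg (fun u => by positivity) integrable_sq_gauss]
  have hsub : Ioi (0:ℝ) ⊆ Function.support fun u : ℝ => u ^ 2 * Real.exp (-u ^ 2) := by
    intro u hu
    have : (0:ℝ) < u ^ 2 * Real.exp (-u ^ 2) :=
      mul_pos (pow_pos hu 2) (Real.exp_pos _)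
    exact fun h => this.ne' h
  refine lt_of_lt_of_le ?_ (measure_mono hsub)
  simp [Real.volume_Ioi]

lemma int_gauss_pos : 0 < ∫ u : ℝ, Real.exp (-u ^ 2) := by
  have : (∫ u : ℝ, Real.exp (-u ^ 2)) = Real.sqrt (π / 1) := by
    simpa using integral_gaussian 1
  rw [this]
  positivity

lemma key_int {h : ℝ → ℝ} (hc : Continuous h) (C : ℝ) (hb : ∀ x, |h x| ≤ C)
    {k : ℝ → ℝ} (hk : Integrable k) {φ : ℝ → ℝ} (hφ : Continuous φ) :
    Integrable fun x => k x * h (φ x) := by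
  have h1 := hk.bdd_mul (hc.comp hφ).aestronglyMeasurable
    (Filter.Eventually.of_forall fun x => by simpa [Real.norm_eq_abs] using hb (φ x))
  exact h1.congr (Filter.Eventually.of_forall fun x => mul_comm _ _)

lemma key {h : ℝ → ℝ} (hpos : ∀ x, 0 < h x) (hC1 : ContDiff ℝ 1 h)
    (hbd : ∀ x, h x ≤ h 0) (s : ℝ) :
    Tendsto (fun t : ℝ => t * ((∫ x, x * Real.exp (-t * x ^ 2) * h (s - x)) /
        (∫ x, Real.exp (-t * x ^ 2) * h (s - x)))) atTop
      (𝓝 ((-(deriv h s) * (∫ u : ℝ, u ^ 2 * Real.exp (-u ^ 2))) /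
        (h s * (∫ u : ℝ, Real.exp (-u ^ 2))))) := by
  have hcont : Continuous h := hC1.continuous
  have hd : ∀ x, HasDerivAt h (deriv h x) x := fun x =>
    ((hC1.differentiable one_ne_zero) x).hasDerivAt
  have hdc : Continuous (deriv h) := hC1.continuous_deriv le_rfl
  have h0pos : 0 < h 0 := hpos 0
  have hhb : ∀ x, |h x| ≤ h 0 := fun x => by
    rw [abs_of_pos (hpos x)]; exact hbd x
  set Nt : ℝ → ℝ := fun t => ∫ u : ℝ, u * Real.exp (-u ^ 2) * h (s - u / Real.sqrt t)
    with hNt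
  set Dt : ℝ → ℝ := fun t => ∫ u : ℝ, Real.exp (-u ^ 2) * h (s - u / Real.sqrt t)
    with hDt
  -- Step A : change of variables
  have stepA : ∀ᶠ t : ℝ in atTop,
      t * ((∫ x, x * Real.exp (-t * x ^ 2) * h (s - x)) /
        (∫ x, Real.exp (-t * x ^ 2) * h (s - x))) = (Real.sqrt t * Nt t) / Dt t := by
    filter_upwards [eventually_gt_atTop 0] with t ht
    have hr : 0 < Real.sqrt t := Real.sqrt_pos.mpr ht
    have hr2 : Real.sqrt t ^ 2 = t := Real.sq_sqrt ht.le
    have hexp : ∀ u : ℝ, -t * (u / Real.sqrt t) ^ 2 = -u ^ 2 := fun u => by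
      rw [div_pow, hr2]
      field_simp [ht.ne']
    -- denominator substitution
    have subD := MeasureTheory.Measure.integral_comp_div
      (g := fun x : ℝ => Real.exp (-t * x ^ 2) * h (s - x)) (Real.sqrt t)
    have eD : (fun u : ℝ => Real.exp (-t * (u / Real.sqrt t) ^ 2) * h (s - u / Real.sqrt t))
        = fun u : ℝ => Real.exp (-u ^ 2) * h (s - u / Real.sqrt t) :=
      funext fun u => by rw [hexp u]
    rw [eD] at subD
    have hDrel : Dt t = Real.sqrt t * (∫ x, Real.exp (-t * x ^ 2) * h (s - x)) := by
      rw [hDt]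
      simpa [abs_of_pos hr, smul_eq_mul] using subD
    -- numerator substitution
    have subN := MeasureTheory.Measure.integral_comp_div
      (g := fun x : ℝ => x * Real.exp (-t * x ^ 2) * h (s - x)) (Real.sqrt t)
    have eN : (fun u : ℝ => u / Real.sqrt t * Real.exp (-t * (u / Real.sqrt t) ^ 2)
          * h (s - u / Real.sqrt t))
        = fun u : ℝ => (Real.sqrt t)⁻¹ * (u * Real.exp (-u ^ 2) * h (s - u / Real.sqrt t)) :=
      funext fun u => by rw [hexp u, div_eq_mul_inv]; ring
    rw [eN] at subN
    rw [integral_const_mul] at subN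
    -- subN : (√t)⁻¹ * Nt t = |√t| • ∫ ...
    have hNrel : Nt t = t * (∫ x, x * Real.exp (-t * x ^ 2) * h (s - x)) := by
      have h1 : (Real.sqrt t)⁻¹ * Nt t
          = Real.sqrt t * ∫ x, x * Real.exp (-t * x ^ 2) * h (s - x) := by
        simpa [abs_of_pos hr, smul_eq_mul] using subN
      have h2 := congrArg (fun z => Real.sqrt t * z) h1
      rw [← mul_assoc, mul_inv_cancel₀ hr.ne', one_mul, ← mul_assoc, ← pow_two, hr2] at h2
      exact h2
    rw [hNrel, hDrel, mul_div_mul_left _ _ hr.ne', mul_div_assoc]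
  -- Step B : denominator limit
  have hmap0 : ∀ u : ℝ, Tendsto (fun t : ℝ => s - u / Real.sqrt t) atTop (𝓝 s) := by
    intro u
    have h1 : Tendsto (fun t : ℝ => u / Real.sqrt t) atTop (𝓝 0) := by
      have h2 := (tendsto_sqrt_atTop'.inv_tendsto_atTop).const_mul u
      simpa [div_eq_mul_inv] using h2
    simpa using tendsto_const_nhds.sub h1
  have stepB : Tendsto Dt atTop (𝓝 (h s * ∫ u : ℝ, Real.exp (-u ^ 2))) := by
    have hDCT := tendsto_integral_filter_of_dominated_convergence (μ := volume) (l := atTop)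
      (F := fun (t : ℝ) (u : ℝ) => Real.exp (-u ^ 2) * h (s - u / Real.sqrt t))
      (f := fun u : ℝ => Real.exp (-u ^ 2) * h s)
      (bound := fun u : ℝ => Real.exp (-u ^ 2) * h 0)
      (by
        refine Filter.Eventually.of_forall fun t => ?_
        exact ((Real.continuous_exp.comp (continuous_pow 2).neg).mul
          (hcont.comp (continuous_const.sub (continuous_id.div_const _)))).aestronglyMeasurable)
      (by
        refine Filter.Eventually.of_forall fun t => Filter.Eventually.of_forall fun u => ?_
        have he : (0:ℝ) < Real.exp (-u ^ 2) := Real.exp_pos _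
        rw [Real.norm_eq_abs, abs_mul, abs_of_pos he]
        exact mul_le_mul_of_nonneg_left (hhb _) he.le)
      (integrable_gauss.mul_const (h 0))
      (by
        refine Filter.Eventually.of_forall fun u => ?_
        exact ((hcont.tendsto s).comp (hmap0 u)).const_mul (Real.exp (-u ^ 2)))
    have : (∫ u : ℝ, Real.exp (-u ^ 2) * h s)
        = h s * ∫ u : ℝ, Real.exp (-u ^ 2) := by
      rw [integral_mul_const, mul_comm]
    rw [← this]
    exact hDCT
  -- Lipschitz constant near s
  obtain ⟨M, hM0, hMlip⟩ : ∃ M : ℝ, 0 ≤ M ∧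
      ∀ y ∈ Icc (s - 1) (s + 1), |h y - h s| ≤ M * |y - s| := by
    obtain ⟨M, hM⟩ := (isCompact_Icc (a := s - 1) (b := s + 1)).exists_bound_of_continuousOn
      hdc.continuousOn
    refine ⟨max M 0, le_max_right _ _, fun y hy => ?_⟩
    have hs : s ∈ Icc (s - 1) (s + 1) := ⟨by linarith, by linarith⟩
    have := (convex_Icc (s - 1) (s + 1)).norm_image_sub_le_of_norm_hasDerivWithin_le
      (f := h) (f' := deriv h) (C := max M 0) (fun x hx => (hd x).hasDerivWithinAt)
      (fun x hx => (hM x hx).trans (le_max_left M 0)) hs hy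
    simpa [Real.norm_eq_abs] using this
  -- Step C : numerator limit
  have stepC : Tendsto (fun t : ℝ => Real.sqrt t * Nt t) atTop
      (𝓝 (-(deriv h s) * ∫ u : ℝ, u ^ 2 * Real.exp (-u ^ 2))) := by
    have heq : ∀ᶠ t : ℝ in atTop, Real.sqrt t * Nt t =
        ∫ u : ℝ, Real.sqrt t * (u * Real.exp (-u ^ 2)
          * (h (s - u / Real.sqrt t) - h s)) := by
      filter_upwards [eventually_gt_atTop 0] with t ht
      have hint1 : Integrable fun u : ℝ => u * Real.exp (-u ^ 2) * h (s - u / Real.sqrt t) :=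
        key_int hcont (h 0) hhb integrable_lin_gauss
          (continuous_const.sub (continuous_id.div_const _))
      have hint2 : Integrable fun u : ℝ => u * Real.exp (-u ^ 2) * h s :=
        integrable_lin_gauss.mul_const (h s)
      have e1 : Nt t = ∫ u : ℝ, (u * Real.exp (-u ^ 2) * h (s - u / Real.sqrt t)
          - u * Real.exp (-u ^ 2) * h s) := by
        rw [integral_sub hint1 hint2, integral_mul_const, int_lin_gauss_zero, zero_mul, sub_zero]
      rw [e1, ← integral_const_mul]
      congr 1
      funext u
      ring
    have hDCT := tendsto_integral_filter_of_dominated_convergence (μ := volume) (l := atTop)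
      (F := fun (t : ℝ) (u : ℝ) => Real.sqrt t * (u * Real.exp (-u ^ 2)
        * (h (s - u / Real.sqrt t) - h s)))
      (f := fun u : ℝ => -(deriv h s) * (u ^ 2 * Real.exp (-u ^ 2)))
      (bound := fun u : ℝ => (M + 2 * h 0) * (u ^ 2 * Real.exp (-u ^ 2)))
      (by
        refine Filter.Eventually.of_forall fun t => ?_
        have c1 : Continuous fun u : ℝ => u * Real.exp (-u ^ 2) :=
          continuous_id.mul (Real.continuous_exp.comp (continuous_pow 2).neg)
        have c2 : Continuous fun u : ℝ => h (s - u / Real.sqrt t) - h s :=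
          (hcont.comp (continuous_const.sub (continuous_id.div_const _))).sub continuous_const
        exact (continuous_const.mul (c1.mul c2)).aestronglyMeasurable)
      (by
        filter_upwards [eventually_ge_atTop 1] with t ht
        refine Filter.Eventually.of_forall fun u => ?_
        have hr1 : (1:ℝ) ≤ Real.sqrt t := by
          rw [show (1:ℝ) = Real.sqrt 1 by simp]
          exact Real.sqrt_le_sqrt ht
        have hr0 : (0:ℝ) < Real.sqrt t := lt_of_lt_of_le one_pos hr1
        have he : (0:ℝ) < Real.exp (-u ^ 2) := Real.exp_pos _
        have hnorm : ‖Real.sqrt t * (u * Real.exp (-u ^ 2)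
            * (h (s - u / Real.sqrt t) - h s))‖
            = Real.sqrt t * (|u| * (Real.exp (-u ^ 2)
              * |h (s - u / Real.sqrt t) - h s|)) := by
          rw [Real.norm_eq_abs, abs_mul, abs_mul, abs_mul, abs_of_pos hr0, abs_of_pos he]
          ring
        rw [hnorm]
        have hq : (0:ℝ) ≤ u ^ 2 * Real.exp (-u ^ 2) := by positivity
        rcases le_or_gt |u| (Real.sqrt t) with hc | hc
        · -- |u| ≤ √t
          have hur : |u / Real.sqrt t| ≤ 1 := by
            rw [abs_div, abs_of_pos hr0]
            exact div_le_one_of_le₀ hc hr0.le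
          have hmem : s - u / Real.sqrt t ∈ Icc (s - 1) (s + 1) := by
            obtain ⟨hl, hr'⟩ := abs_le.mp hur
            exact ⟨by linarith, by linarith⟩
          have hd1 : |h (s - u / Real.sqrt t) - h s| ≤ M * |u / Real.sqrt t| := by
            have h5 := hMlip _ hmem
            rw [show s - u / Real.sqrt t - s = -(u / Real.sqrt t) by ring, abs_neg] at h5
            exact h5
          have hd2 : Real.sqrt t * |h (s - u / Real.sqrt t) - h s| ≤ M * |u| := by
            have h3 := mul_le_mul_of_nonneg_left hd1 hr0.le
            have h4 : Real.sqrt t * (M * |u / Real.sqrt t|) = M * |u| := by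
              rw [abs_div, abs_of_pos hr0]
              field_simp
            linarith [h3, h4.le]
          calc Real.sqrt t * (|u| * (Real.exp (-u ^ 2) * |h (s - u / Real.sqrt t) - h s|))
              = (|u| * Real.exp (-u ^ 2))
                * (Real.sqrt t * |h (s - u / Real.sqrt t) - h s|) := by ring
            _ ≤ (|u| * Real.exp (-u ^ 2)) * (M * |u|) :=
                mul_le_mul_of_nonneg_left hd2 (by positivity)
            _ = M * (u ^ 2 * Real.exp (-u ^ 2)) := by
                rw [← sq_abs u]; ring
            _ ≤ (M + 2 * h 0) * (u ^ 2 * Real.exp (-u ^ 2)) := by nlinarith [h0pos, hq]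
        · -- √t < |u|
          have hd2' : |h (s - u / Real.sqrt t) - h s| ≤ 2 * h 0 := by
            rw [sub_eq_add_neg]
            refine (abs_add_le _ _).trans ?_
            rw [abs_neg]
            linarith [hhb (s - u / Real.sqrt t), hhb s]
          have hru : Real.sqrt t * |h (s - u / Real.sqrt t) - h s| ≤ |u| * (2 * h 0) :=
            mul_le_mul hc.le hd2' (abs_nonneg _) (abs_nonneg _)
          calc Real.sqrt t * (|u| * (Real.exp (-u ^ 2) * |h (s - u / Real.sqrt t) - h s|))
              = (|u| * Real.exp (-u ^ 2))
                * (Real.sqrt t * |h (s - u / Real.sqrt t) - h s|) := by ring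
            _ ≤ (|u| * Real.exp (-u ^ 2)) * (|u| * (2 * h 0)) :=
                mul_le_mul_of_nonneg_left hru (by positivity)
            _ = (2 * h 0) * (u ^ 2 * Real.exp (-u ^ 2)) := by
                rw [← sq_abs u]; ring
            _ ≤ (M + 2 * h 0) * (u ^ 2 * Real.exp (-u ^ 2)) := by nlinarith [hM0, hq])
      (integrable_sq_gauss.const_mul _)
      (by
        refine Filter.Eventually.of_forall fun u => ?_
        by_cases hu : u = 0
        · subst hu
          simpa using (tendsto_const_nhds :
            Tendsto (fun _ : ℝ => (0:ℝ)) atTop (𝓝 0))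
        · have hmapne : Tendsto (fun t : ℝ => s - u / Real.sqrt t) atTop (𝓝[≠] s) := by
            rw [tendsto_nhdsWithin_iff]
            refine ⟨hmap0 u, ?_⟩
            filter_upwards [eventually_gt_atTop 0] with t ht
            have hne : u / Real.sqrt t ≠ 0 :=
              div_ne_zero hu (Real.sqrt_ne_zero'.mpr ht)
            simp only [mem_compl_iff, mem_singleton_iff]
            exact fun hcontra => hne (sub_eq_self.mp hcontra)
          have hslope := hasDerivAt_iff_tendsto_slope.mp (hd s)
          have hcomp := hslope.comp hmapne
          have hfinal := hcomp.const_mul (-(u ^ 2) * Real.exp (-u ^ 2))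
          have hval : -(deriv h s) * (u ^ 2 * Real.exp (-u ^ 2))
              = -(u ^ 2) * Real.exp (-u ^ 2) * deriv h s := by ring
          show Tendsto (fun t : ℝ => Real.sqrt t * (u * Real.exp (-u ^ 2)
            * (h (s - u / Real.sqrt t) - h s))) atTop
            (𝓝 (-(deriv h s) * (u ^ 2 * Real.exp (-u ^ 2))))
          rw [hval]
          refine Filter.Tendsto.congr' ?_ hfinal
          filter_upwards [eventually_gt_atTop 0] with t ht
          have hr0 : (0:ℝ) < Real.sqrt t := Real.sqrt_pos.mpr ht
          simp only [Function.comp]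
          rw [slope_def_field]
          have hxs : s - u / Real.sqrt t - s = -(u / Real.sqrt t) := by ring
          rw [hxs]
          field_simp)
    have hIval : (∫ u : ℝ, -(deriv h s) * (u ^ 2 * Real.exp (-u ^ 2)))
        = -(deriv h s) * ∫ u : ℝ, u ^ 2 * Real.exp (-u ^ 2) := integral_const_mul _ _
    rw [hIval] at hDCT
    exact Filter.Tendsto.congr' (Filter.EventuallyEq.symm heq) hDCT
  -- Step D : combine
  have hden : h s * (∫ u : ℝ, Real.exp (-u ^ 2)) ≠ 0 :=
    (mul_pos (hpos s) int_gauss_pos).ne'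
  have final := stepC.div stepB hden
  exact Filter.Tendsto.congr' (Filter.EventuallyEq.symm stepA) final


/-- symmetric + quasi-concave implies bounded by value at 0 -/
lemma bd_of_symm_qc {h : ℝ → ℝ} (hs : SymmAbout 0 h) (hq : QuasiConcaveFn h) :
    ∀ x, h x ≤ h 0 := by
  intro x
  have h1 : h (-x) = h x := by
    have h2 := hs x
    simpa using h2.symm
  have h3 := hq x (-x) (1/2) (by norm_num) (by norm_num)
  have e : (1/2 : ℝ) * x + (1 - 1/2) * (-x) = 0 := by ring
  rw [e] at h3
  simpa [h1] using h3

end PrecisionAux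

open PrecisionAux

/-- Theorem 1 (necessity): if `g` is not less precise than `f`, attenuation can fail. -/
theorem precision_order_necessary
    (f g : ℝ → ℝ)
    (hf : IsDensity f) (hfsym : SymmAbout 0 f) (hfqc : QuasiConcaveFn f)
    (hg : IsDensity g) (hgsym : SymmAbout 0 g) (hgqc : QuasiConcaveFn g)
    (hnot : ¬ LessPrecise g f) :
    ∃ fX : ℝ → ℝ, IsDensity fX ∧ SymmAbout 0 fX ∧ LogConcaveFn fX ∧
      ∃ s : ℝ, 0 < s ∧ postMean fX f s < postMean fX g s := by
  classical
  -- extract a violation of monotonicity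
  obtain ⟨a, ha, b, hb, hab, hlt⟩ :
      ∃ a ∈ Ioi (0:ℝ), ∃ b ∈ Ioi (0:ℝ), a ≤ b ∧ g b / f b < g a / f a := by
    unfold LessPrecise MonotoneOn at hnot
    push_neg at hnot
    obtain ⟨a, ha, b, hb, hab, hlt⟩ := hnot
    exact ⟨a, ha, b, hb, hab, hlt⟩
  have hab' : a < b := lt_of_le_of_ne hab (by rintro rfl; exact absurd hlt (lt_irrefl _))
  have hfd : ∀ x, HasDerivAt f (deriv f x) x := fun x =>
    ((hf.2.1.differentiable one_ne_zero) x).hasDerivAt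
  have hgd : ∀ x, HasDerivAt g (deriv g x) x := fun x =>
    ((hg.2.1.differentiable one_ne_zero) x).hasDerivAt
  -- mean value theorem for the ratio g/f
  obtain ⟨s, hsab, hks⟩ := exists_hasDerivAt_eq_slope (fun x => g x / f x)
    (fun x => (deriv g x * f x - g x * deriv f x) / f x ^ 2) hab'
    ((hg.2.1.continuous.continuousOn).div (hf.2.1.continuous.continuousOn)
      (fun x _ => (hf.1 x).ne'))
    (fun x _ => (hgd x).div (hfd x) (hf.1 x).ne')
  have hs0 : 0 < s := lt_trans ha hsab.1
  have hval : (deriv g s * f s - g s * deriv f s) / f s ^ 2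
      = (g b / f b - g a / f a) / (b - a) := hks
  have hslope_neg : (deriv g s * f s - g s * deriv f s) / f s ^ 2 < 0 := by
    rw [hval]
    exact div_neg_of_neg_of_pos (by linarith) (by linarith)
  have hfs2 : (0:ℝ) < f s ^ 2 := pow_pos (hf.1 s) 2
  have hkey : deriv g s * f s < g s * deriv f s := by
    by_contra hcon
    push_neg at hcon
    have h9 : (0:ℝ) ≤ (deriv g s * f s - g s * deriv f s) / f s ^ 2 :=
      div_nonneg (by linarith) hfs2.le
    linarith
  -- limits of scaled posterior means
  have Tf := PrecisionAux.key hf.1 hf.2.1 (bd_of_symm_qc hfsym hfqc) s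
  have Tg := PrecisionAux.key hg.1 hg.2.1 (bd_of_symm_qc hgsym hgqc) s
  have hC2 := PrecisionAux.int_sq_gauss_pos
  have hC0 := PrecisionAux.int_gauss_pos
  have hLfLg : (-(deriv f s) * (∫ u : ℝ, u ^ 2 * Real.exp (-u ^ 2))) /
        (f s * (∫ u : ℝ, Real.exp (-u ^ 2)))
      < (-(deriv g s) * (∫ u : ℝ, u ^ 2 * Real.exp (-u ^ 2))) /
        (g s * (∫ u : ℝ, Real.exp (-u ^ 2))) := by
    rw [div_lt_div_iff₀ (mul_pos (hf.1 s) hC0) (mul_pos (hg.1 s) hC0)]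
    nlinarith [mul_lt_mul_of_pos_right hkey (mul_pos hC2 hC0)]
  have hev := (Tf.eventually_lt Tg hLfLg).and (eventually_gt_atTop (0:ℝ))
  obtain ⟨t, hts, ht⟩ := hev.exists
  have hc : 0 < Real.sqrt (t / π) := Real.sqrt_pos.mpr (div_pos ht pi_pos)
  -- the prior
  set fX : ℝ → ℝ := fun x => Real.sqrt (t / π) * Real.exp (-t * x ^ 2) with hfX
  have hpm : ∀ h : ℝ → ℝ, postMean fX h s
      = (∫ x, x * Real.exp (-t * x ^ 2) * h (s - x)) /
        (∫ x, Real.exp (-t * x ^ 2) * h (s - x)) := by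
    intro h
    simp only [postMean, hfX]
    have e1 : (fun x => x * (Real.sqrt (t / π) * Real.exp (-t * x ^ 2)) * h (s - x))
        = fun x => Real.sqrt (t / π) * (x * Real.exp (-t * x ^ 2) * h (s - x)) :=
      funext fun x => by ring
    have e2 : (fun x => Real.sqrt (t / π) * Real.exp (-t * x ^ 2) * h (s - x))
        = fun x => Real.sqrt (t / π) * (Real.exp (-t * x ^ 2) * h (s - x)) :=
      funext fun x => by ring
    rw [e1, e2, integral_const_mul, integral_const_mul, mul_div_mul_left _ _ hc.ne']
  refine ⟨fX, ?_, ?_, ?_, s, hs0, ?_⟩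
  · -- IsDensity
    refine ⟨fun x => mul_pos hc (Real.exp_pos _), ?_, ?_, ?_⟩
    · have h1 : ContDiff ℝ 1 fun x : ℝ => -t * x ^ 2 :=
        contDiff_const.mul (contDiff_id.pow 2)
      exact contDiff_const.mul (Real.contDiff_exp.comp h1)
    · rw [hfX]
      rw [integral_const_mul, integral_gaussian,
        ← Real.sqrt_mul (le_of_lt (div_pos ht pi_pos)) (π / t),
        show t / π * (π / t) = 1 by field_simp]
      exact Real.sqrt_one
    · have h1 : Integrable fun x : ℝ => |x| * Real.exp (-t * x ^ 2) := by
        have h2 := (integrable_mul_exp_neg_mul_sq ht).abs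
        simpa [abs_mul, Real.abs_exp] using h2
      have h3 := h1.const_mul (Real.sqrt (t / π))
      exact h3.congr (Filter.Eventually.of_forall fun x => by rw [hfX]; ring)
  · -- symmetric
    intro x
    simp [hfX, zero_sub, neg_sq]
  · -- log-concave
    unfold LogConcaveFn
    have heq : (fun x : ℝ => Real.log (fX x))
        = fun x : ℝ => Real.log (Real.sqrt (t / π)) + -(t * x ^ 2) := by
      funext x
      rw [hfX]
      simp only
      rw [Real.log_mul hc.ne' (Real.exp_ne_zero _), Real.log_exp, neg_mul]
    rw [heq]
    have hconv : ConvexOn ℝ (univ : Set ℝ) fun x : ℝ => t * x ^ 2 := by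
      have h2 : ConvexOn ℝ (univ : Set ℝ) fun x : ℝ => x ^ 2 :=
        Even.convexOn_pow (even_two)
      have h3 := h2.smul ht.le
      simpa [smul_eq_mul] using h3
    exact (concaveOn_const _ convex_univ).add hconv.neg
  · -- the posterior mean inequality
    rw [hpm f, hpm g]
    have h5 := hts
    exact lt_of_mul_lt_mul_left (by exact h5) ht.le
end
end

section
/- Scaling decreases precision (Lemma 1). Let f be a density symmetric about 0 such that the function x ↦ log f(exp x) is concave on ℝ. For σ > 0 define the scaled density f_σ(x) := (1/σ)·f(x/σ). Then for all 0 < σ < σ′, f_{σ′} is less precise than f_σ: the ratio x ↦ f_{σ′}(x)/f_σ(x) is nondecreasing on (0,∞). -/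
open MeasureTheory Real Set

noncomputable section

lemma concave_four_s3 {φ : ℝ → ℝ} (hφ : ConcaveOn ℝ Set.univ φ) {p q r s : ℝ}
    (hpq : p ≤ q) (hqs : q ≤ s) (hpr : p ≤ r) (hrs : r ≤ s)
    (hsum : p + s = q + r) : φ p + φ s ≤ φ q + φ r := by
  rcases eq_or_lt_of_le (hpq.trans hqs) with h | h
  · have hq : q = p := le_antisymm (by linarith) hpq
    have hr : r = p := le_antisymm (by linarith) hpr
    rw [hq, hr, ← h]
  · have hsp : 0 < s - p := by linarith
    have ht0 : 0 ≤ (s - q) / (s - p) := div_nonneg (by linarith) hsp.le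
    have ht1 : (s - q) / (s - p) ≤ 1 := (div_le_one hsp).2 (by linarith)
    have hq' : ((s - q) / (s - p)) * p + (1 - (s - q) / (s - p)) * s = q := by
      field_simp; ring
    have hr' : (1 - (s - q) / (s - p)) * p + ((s - q) / (s - p)) * s = r := by
      have hrr : r = p + s - q := by linarith
      rw [hrr]; field_simp; ring
    have h1 := hφ.2 (Set.mem_univ p) (Set.mem_univ s) ht0
      (show (0:ℝ) ≤ 1 - (s - q) / (s - p) by linarith)
      (show (s - q) / (s - p) + (1 - (s - q) / (s - p)) = 1 by ring)
    have h2 := hφ.2 (Set.mem_univ p) (Set.mem_univ s)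
      (show (0:ℝ) ≤ 1 - (s - q) / (s - p) by linarith) ht0
      (show (1 - (s - q) / (s - p)) + (s - q) / (s - p) = 1 by ring)
    simp only [smul_eq_mul] at h1 h2
    rw [hq'] at h1
    rw [hr'] at h2
    nlinarith [h1, h2]

/-- Lemma 1: scaling up a noise density whose log-exp reparametrization is concave
yields a less precise density. -/
theorem scaling_decreases_precision
    (f : ℝ → ℝ) (hf : IsDensity f) (hsym : SymmAbout 0 f)
    (hconc : ConcaveOn ℝ Set.univ fun x => Real.log (f (Real.exp x)))
    (σ σ' : ℝ) (hσ : 0 < σ) (hσ' : σ < σ') :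
    LessPrecise (fun x => (1 / σ') * f (x / σ')) (fun x => (1 / σ) * f (x / σ)) := by
  intro x hx y hy hxy
  simp only [Set.mem_Ioi] at hx hy
  have hpos := hf.1
  have hσ'0 : 0 < σ' := hσ.trans hσ'
  have hlog : Real.log σ ≤ Real.log σ' := Real.log_le_log hσ hσ'.le
  have hlxy : Real.log x ≤ Real.log y := Real.log_le_log hx hxy
  have key := concave_four_s3 hconc
    (p := Real.log x - Real.log σ') (q := Real.log x - Real.log σ)
    (r := Real.log y - Real.log σ') (s := Real.log y - Real.log σ)
    (by linarith) (by linarith) (by linarith) (by linarith) (by ring)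
  have ex : ∀ a b : ℝ, 0 < a → 0 < b → Real.exp (Real.log a - Real.log b) = a / b := by
    intro a b ha hb
    rw [Real.exp_sub, Real.exp_log ha, Real.exp_log hb]
  rw [ex x σ' hx hσ'0, ex y σ hy hσ, ex x σ hx hσ, ex y σ' hy hσ'0] at key
  have hprod : f (x / σ') * f (y / σ) ≤ f (x / σ) * f (y / σ')  := by
    have := Real.exp_le_exp.2 key
    rw [Real.exp_add, Real.exp_add, Real.exp_log (hpos _), Real.exp_log (hpos _),
      Real.exp_log (hpos _), Real.exp_log (hpos _)] at this
    linarith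
  show (1 / σ') * f (x / σ') / ((1 / σ) * f (x / σ)) ≤
    (1 / σ') * f (y / σ') / ((1 / σ) * f (y / σ))
  rw [div_le_div_iff₀ (mul_pos (one_div_pos.2 hσ) (hpos _)) (mul_pos (one_div_pos.2 hσ) (hpos _))]
  have h1 : 0 < 1 / σ := by positivity
  have h2 : 0 < 1 / σ' := by positivity
  nlinarith [mul_le_mul_of_nonneg_left hprod (mul_pos h1 h2).le]
end
end

section
/- Comparative statics in the scale parameter (Corollary 1). Let f_X be a log-concave density symmetric about its mean μ, and let f_ε be a log-concave density symmetric about 0. For σ > 0, let E_σ[X|S=s] denote the posterior mean under prior f_X and noise density x ↦ (1/σ)·f_ε(x/σ). Then for all σ̃ > σ > 0: for every s ≤ μ, E_σ[X|S=s] ≤ E_σ̃[X|S=s] ≤ μ, and for every s ≥ μ, E_σ[X|S=s] ≥ E_σ̃[X|S=s] ≥ μ. -/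
open MeasureTheory Real Set

noncomputable section

lemma concave_pair {ψ : ℝ → ℝ} (hψ : ConcaveOn ℝ Set.univ ψ) {a b c d : ℝ}
    (hab : a ≤ b) (hac : a ≤ c) (hsum : b + c = a + d) :
    ψ a + ψ d ≤ ψ b + ψ c := by
  have had : a ≤ d := by linarith
  rcases eq_or_lt_of_le had with h | h
  · have hb : b = a := by nlinarith
    have hc : c = a := by nlinarith
    rw [hb, hc, ← h]
  · set t : ℝ := (d - b) / (d - a) with ht
    have hda : 0 < d - a := by linarith
    have ht0 : 0 ≤ t := div_nonneg (by linarith) hda.le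
    have ht1 : 0 ≤ 1 - t := by
      rw [ht]; rw [sub_nonneg, div_le_one hda]; linarith
    have hsum1 : t + (1 - t) = 1 := by ring
    have hb : t * a + (1 - t) * d = b := by
      rw [ht, div_mul_eq_mul_div, one_sub_div hda.ne', div_mul_eq_mul_div, ← add_div,
        div_eq_iff hda.ne']; ring
    have hc : (1 - t) * a + t * d = c := by field_simp [ht]; nlinarith [hsum]
    have h1 := hψ.2 (mem_univ a) (mem_univ d) ht0 ht1 hsum1
    have h2 := hψ.2 (mem_univ a) (mem_univ d) ht1 ht0 (by ring)
    rw [smul_eq_mul, smul_eq_mul, smul_eq_mul, smul_eq_mul] at h1 h2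
    rw [hb] at h1; rw [hc] at h2
    linarith

lemma logconc_prod {f : ℝ → ℝ} (hpos : ∀ x, 0 < f x) (hlc : LogConcaveFn f) {a b c d : ℝ}
    (hab : a ≤ b) (hac : a ≤ c) (hsum : b + c = a + d) :
    f a * f d ≤ f b * f c := by
  have h := concave_pair hlc hab hac hsum
  have h1 : Real.log (f a * f d) ≤ Real.log (f b * f c) := by
    rw [Real.log_mul (hpos a).ne' (hpos d).ne', Real.log_mul (hpos b).ne' (hpos c).ne']
    linarith
  exact (Real.log_le_log_iff (mul_pos (hpos a) (hpos d)) (mul_pos (hpos b) (hpos c))).1 h1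

lemma logconc_anti {f : ℝ → ℝ} (hpos : ∀ x, 0 < f x) (hlc : LogConcaveFn f)
    (heven : ∀ x, f (-x) = f x) {a b : ℝ} (ha : 0 ≤ a) (hab : a ≤ b) : f b ≤ f a := by
  have h := logconc_prod hpos hlc (a := -b) (b := a) (c := -a) (d := b)
    (by linarith) (by linarith) (by ring)
  rw [heven b, heven a] at h
  nlinarith [hpos a, hpos b]

lemma logconc_abs_anti {f : ℝ → ℝ} (hpos : ∀ x, 0 < f x) (hlc : LogConcaveFn f)
    (heven : ∀ x, f (-x) = f x) {a b : ℝ} (hab : |a| ≤ |b|) : f b ≤ f a := by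
  have h1 : f b = f |b| := by rcases abs_cases b with ⟨h, _⟩ | ⟨h, _⟩ <;> rw [h]; rw [heven]
  have h2 : f a = f |a| := by rcases abs_cases a with ⟨h, _⟩ | ⟨h, _⟩ <;> rw [h]; rw [heven]
  rw [h1, h2]
  exact logconc_anti hpos hlc heven (abs_nonneg a) hab

def Kfun (fε : ℝ → ℝ) (σ σ' u v : ℝ) : ℝ :=
  fε (u / σ) * fε (v / σ') - fε (v / σ) * fε (u / σ')

def Wfun (φ : ℝ → ℝ) (m u v : ℝ) : ℝ :=
  (v - u) * (φ (m - u) * φ (m - v) - φ (m + u) * φ (m + v)) +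
  (v + u) * (φ (m + u) * φ (m - v) - φ (m - u) * φ (m + v))

lemma Klem {fε : ℝ → ℝ} (hpos : ∀ x, 0 < fε x) (hlc : LogConcaveFn fε)
    (heven : ∀ x, fε (-x) = fε x) {σ σ' u v : ℝ} (hσ : 0 < σ) (hσ' : σ < σ')
    (hu : 0 ≤ u) (huv : u ≤ v) : 0 ≤ Kfun fε σ σ' u v := by
  have hσ'0 : 0 < σ' := hσ.trans hσ'
  set a := u / σ' with ha
  set b := u / σ with hb
  set c := v / σ' with hc
  set d := v / σ with hd
  have hv : 0 ≤ v := hu.trans huv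
  have hab : a ≤ b := by rw [ha, hb]; gcongr
  have hac : a ≤ c := by rw [ha, hc]; gcongr
  have hcd : c ≤ d := by rw [hc, hd]; gcongr
  have ha0 : 0 ≤ a := div_nonneg hu hσ'0.le
  have hbc_ad : b + c ≤ a + d := by
    rw [ha, hb, hc, hd, div_add_div _ _ hσ.ne' hσ'0.ne', div_add_div _ _ hσ'0.ne' hσ.ne']
    rw [div_le_div_iff₀ (by positivity) (by positivity)]
    nlinarith [mul_nonneg (mul_nonneg (mul_pos hσ hσ'0).le (sub_nonneg.2 hσ'.le)) (sub_nonneg.2 huv)]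
  set d' := b + c - a with hd'
  have h1 : fε a * fε d' ≤ fε b * fε c :=
    logconc_prod hpos hlc hab hac (by rw [hd']; ring)
  have h2 : fε d ≤ fε d' := by
    apply logconc_anti hpos hlc heven (by rw [hd']; linarith) (by rw [hd']; linarith)
  have h3 : fε a * fε d ≤ fε a * fε d' := by
    exact mul_le_mul_of_nonneg_left h2 (hpos a).le
  rw [Kfun]
  nlinarith [h1, h3]

lemma Wlem {φ : ℝ → ℝ} (hpos : ∀ x, 0 < φ x) (hlc : LogConcaveFn φ)
    (heven : ∀ x, φ (-x) = φ x) {m u v : ℝ} (hm : m ≤ 0)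
    (hu : 0 ≤ u) (huv : u ≤ v) : Wfun φ m u v ≤ 0 := by
  have hv : 0 ≤ v := hu.trans huv
  have hαγ : φ (m - u) ≤ φ (m + u) := by
    apply logconc_abs_anti hpos hlc heven
    rw [abs_sub_comm]
    have h1 : |u - m| = u - m := abs_of_nonneg (by linarith)
    rw [h1]
    rw [abs_le]; constructor <;> linarith
  have hβδ : φ (m - v) ≤ φ (m + v) := by
    apply logconc_abs_anti hpos hlc heven
    rw [abs_sub_comm]
    have h1 : |v - m| = v - m := abs_of_nonneg (by linarith)
    rw [h1]
    rw [abs_le]; constructor <;> linarith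
  have hcross : φ (m - v) * φ (m + u) ≤ φ (m - u) * φ (m + v) := by
    have h := logconc_prod hpos hlc (a := m + u) (b := m + v) (c := u - m) (d := v - m)
      (by linarith) (by linarith) (by ring)
    have e1 : φ (u - m) = φ (m - u) := by rw [← heven (u - m)]; ring_nf
    have e2 : φ (v - m) = φ (m - v) := by rw [← heven (v - m)]; ring_nf
    rw [e1, e2] at h
    linarith [h]
  have h1 : 0 ≤ (φ (m - v) + φ (m + v)) * (φ (m + u) - φ (m - u)) :=
    mul_nonneg (by nlinarith [hpos (m - v), hpos (m + v)]) (sub_nonneg.2 hαγ)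
  have h2 : (φ (m - v) + φ (m + v)) * (φ (m + u) - φ (m - u)) ≤
      (φ (m - u) + φ (m + u)) * (φ (m + v) - φ (m - v)) := by nlinarith [hcross]
  have h3 : v * ((φ (m - v) + φ (m + v)) * (φ (m + u) - φ (m - u))) ≤
      v * ((φ (m - u) + φ (m + u)) * (φ (m + v) - φ (m - v))) :=
    mul_le_mul_of_nonneg_left h2 hv
  have h4 : u * ((φ (m - v) + φ (m + v)) * (φ (m + u) - φ (m - u))) ≤
      v * ((φ (m - v) + φ (m + v)) * (φ (m + u) - φ (m - u))) :=
    mul_le_mul_of_nonneg_right huv h1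
  rw [Wfun]
  nlinarith [h3, h4]

lemma Pall {fε φ : ℝ → ℝ} (hεpos : ∀ x, 0 < fε x) (hεlc : LogConcaveFn fε)
    (hεeven : ∀ x, fε (-x) = fε x)
    (hφpos : ∀ x, 0 < φ x) (hφlc : LogConcaveFn φ) (hφeven : ∀ x, φ (-x) = φ x)
    {σ σ' m : ℝ} (hσ : 0 < σ) (hσ' : σ < σ') (hm : m ≤ 0) (u v : ℝ) :
    Kfun fε σ σ' u v * Wfun φ m u v ≤ 0 := by
  have Knu : ∀ u v : ℝ, Kfun fε σ σ' (-u) v = Kfun fε σ σ' u v := by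
    intro u v; simp only [Kfun, neg_div, hεeven]
  have Knv : ∀ u v : ℝ, Kfun fε σ σ' u (-v) = Kfun fε σ σ' u v := by
    intro u v; simp only [Kfun, neg_div, hεeven]
  have Wnu : ∀ u v : ℝ, Wfun φ m (-u) v = Wfun φ m u v := by
    intro u v
    simp only [Wfun, sub_neg_eq_add, ← sub_eq_add_neg]
    ring
  have Wnv : ∀ u v : ℝ, Wfun φ m u (-v) = Wfun φ m u v := by
    intro u v
    simp only [Wfun, sub_neg_eq_add, ← sub_eq_add_neg]
    ring
  have core : ∀ u v : ℝ, 0 ≤ u → u ≤ v → Kfun fε σ σ' u v * Wfun φ m u v ≤ 0 := by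
    intro u v hu huv
    exact mul_nonpos_iff.2 (Or.inl ⟨Klem hεpos hεlc hεeven hσ hσ' hu huv,
      Wlem hφpos hφlc hφeven hm hu huv⟩)
  have core2 : ∀ u v : ℝ, 0 ≤ u → 0 ≤ v → Kfun fε σ σ' u v * Wfun φ m u v ≤ 0 := by
    intro u v hu hv
    rcases le_total u v with h | h
    · exact core u v hu h
    · have h1 := core v u hv h
      have e : Kfun fε σ σ' v u * Wfun φ m v u
          = Kfun fε σ σ' u v * Wfun φ m u v := by
        simp only [Kfun, Wfun]; ring
      linarith [e ▸ h1]
  have eu : Kfun fε σ σ' u v * Wfun φ m u v = Kfun fε σ σ' |u| |v| * Wfun φ m |u| |v| := by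
    rcases abs_cases u with ⟨h, _⟩ | ⟨h, _⟩ <;> rcases abs_cases v with ⟨h2, _⟩ | ⟨h2, _⟩ <;>
      rw [h, h2] <;> simp only [Knu, Knv, Wnu, Wnv]
  rw [eu]
  exact core2 _ _ (abs_nonneg u) (abs_nonneg v)

lemma my_integral_comp_sub (f : ℝ → ℝ) (a : ℝ) : ∫ x, f (a - x) = ∫ x, f x := by
  rw [← integral_neg_eq_self (fun x => f (a - x))]
  simp_rw [sub_neg_eq_add]
  exact integral_add_left_eq_self f a

lemma my_integrable_comp_sub {f : ℝ → ℝ} (hf : Integrable f) (a : ℝ) :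
    Integrable (fun x => f (a - x)) := by
  simpa [sub_eq_add_neg] using (hf.comp_add_left a).comp_neg

lemma iter_double {n : ℕ} (P Q : Fin n → ℝ → ℝ) (hQ : ∀ i, Integrable (Q i))
    (hP : ∀ i, Integrable (P i)) :
    (∫ x, ∫ y, ∑ i, P i x * Q i y) = ∑ i, (∫ x, P i x) * (∫ y, Q i y) := by
  have h1 : ∀ x, (∫ y, ∑ i, P i x * Q i y) = ∑ i, P i x * (∫ y, Q i y) := by
    intro x
    rw [integral_finset_sum _ (fun i _ => (hQ i).const_mul _)]
    exact Finset.sum_congr rfl fun i _ => integral_const_mul _ _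
  simp_rw [h1]
  rw [integral_finset_sum _ (fun i _ => (hP i).mul_const _)]
  exact Finset.sum_congr rfl fun i _ => integral_mul_const _ _

def Ag (fX fε : ℝ → ℝ) (s τ : ℝ) : ℝ → ℝ := fun t => fX t * (1/τ * fε ((s - t)/τ))
def Bg (fX fε : ℝ → ℝ) (s τ : ℝ) : ℝ → ℝ := fun t => t * fX t * (1/τ * fε ((s - t)/τ))

lemma mainIneq (fX fε : ℝ → ℝ) (μ s σ σ' : ℝ)
    (hXpos : ∀ x, 0 < fX x) (hXcont : Continuous fX) (hXint : Integrable fX)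
    (hXm : Integrable (fun x => |x| * fX x)) (hXsym : ∀ x, fX (μ + x) = fX (μ - x))
    (hXlc : LogConcaveFn fX)
    (hεpos : ∀ x, 0 < fε x) (hεcont : Continuous fε) (hεeven : ∀ x, fε (-x) = fε x)
    (hεlc : LogConcaveFn fε) (hσ : 0 < σ) (hσ' : σ < σ') (hs : s ≤ μ) :
    (∫ x, Bg fX fε s σ x) * (∫ x, Ag fX fε s σ' x) ≤
      (∫ x, Bg fX fε s σ' x) * (∫ x, Ag fX fε s σ x) := by
  have hσ'0 : 0 < σ' := hσ.trans hσ'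
  -- boundedness of the scaled noise density
  have hmax : ∀ t, fε t ≤ fε 0 := fun t =>
    logconc_abs_anti hεpos hεlc hεeven (by simp)
  have hgb : ∀ τ : ℝ, 0 < τ → ∀ t : ℝ, ‖1/τ * fε ((s - t)/τ)‖ ≤ 1/τ * fε 0 := by
    intro τ hτ t
    rw [norm_eq_abs, abs_of_pos (mul_pos (by positivity) (hεpos _))]
    exact mul_le_mul_of_nonneg_left (hmax _) (by positivity)
  have hgcont : ∀ τ : ℝ, Continuous fun t : ℝ => 1/τ * fε ((s - t)/τ) :=
    fun τ => continuous_const.mul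
      (hεcont.comp ((continuous_const.sub continuous_id).div_const τ))
  have hxfX : Integrable (fun t => t * fX t) := by
    have hc : Continuous (fun t : ℝ => t * fX t) := continuous_id.mul hXcont
    apply hXm.mono' hc.aestronglyMeasurable
    filter_upwards with t
    rw [norm_eq_abs, abs_mul, abs_of_pos (hXpos t)]
  have hA : ∀ τ : ℝ, 0 < τ → Integrable (Ag fX fε s τ) := by
    intro τ hτ
    have h1 := hXint.bdd_mul (hgcont τ).aestronglyMeasurable (Filter.Eventually.of_forall (hgb τ hτ))
    have h2 : Ag fX fε s τ = fun x => (1/τ * fε ((s - x)/τ)) * fX x :=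
      funext fun x => by simp only [Ag]; ring
    rw [h2]; exact h1
  have hB : ∀ τ : ℝ, 0 < τ → Integrable (Bg fX fε s τ) := by
    intro τ hτ
    have h1 := hxfX.bdd_mul (hgcont τ).aestronglyMeasurable (Filter.Eventually.of_forall (hgb τ hτ))
    have h2 : Bg fX fε s τ = fun x => (1/τ * fε ((s - x)/τ)) * (x * fX x) :=
      funext fun x => by simp only [Bg]; ring
    rw [h2]; exact h1
  have hA1 := hA σ hσ
  have hA2 := hA σ' hσ'0
  have hB1 := hB σ hσ
  have hB2 := hB σ' hσ'0
  have hRA1 : Integrable (fun t => Ag fX fε s σ (2*s - t)) := my_integrable_comp_sub hA1 _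
  have hRA2 : Integrable (fun t => Ag fX fε s σ' (2*s - t)) := my_integrable_comp_sub hA2 _
  have hRB1 : Integrable (fun t => Bg fX fε s σ (2*s - t)) := my_integrable_comp_sub hB1 _
  have hRB2 : Integrable (fun t => Bg fX fε s σ' (2*s - t)) := my_integrable_comp_sub hB2 _
  set P : Fin 16 → ℝ → ℝ := ![
    Bg fX fε s σ, fun t => -(Ag fX fε s σ t),
    Ag fX fε s σ', fun t => -(Bg fX fε s σ' t),
    fun t => Bg fX fε s σ (2*s - t), fun t => -(Ag fX fε s σ (2*s - t)),
    Bg fX fε s σ, fun t => -(Ag fX fε s σ t),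
    fun t => Bg fX fε s σ (2*s - t), fun t => -(Ag fX fε s σ (2*s - t)),
    Ag fX fε s σ', fun t => -(Bg fX fε s σ' t),
    fun t => Ag fX fε s σ' (2*s - t), fun t => -(Bg fX fε s σ' (2*s - t)),
    fun t => Ag fX fε s σ' (2*s - t), fun t => -(Bg fX fε s σ' (2*s - t))] with hP
  set Q : Fin 16 → ℝ → ℝ := ![
    Ag fX fε s σ', Bg fX fε s σ',
    Bg fX fε s σ, Ag fX fε s σ,
    Ag fX fε s σ', Bg fX fε s σ',
    fun t => Ag fX fε s σ' (2*s - t), fun t => Bg fX fε s σ' (2*s - t),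
    fun t => Ag fX fε s σ' (2*s - t), fun t => Bg fX fε s σ' (2*s - t),
    fun t => Bg fX fε s σ (2*s - t), fun t => Ag fX fε s σ (2*s - t),
    Bg fX fε s σ, Ag fX fε s σ,
    fun t => Bg fX fε s σ (2*s - t), fun t => Ag fX fε s σ (2*s - t)] with hQ
  have hPint : ∀ i, Integrable (P i) := by
    intro i
    fin_cases i <;>
      simp only [hP, Matrix.cons_val_zero, Matrix.cons_val_one, Matrix.head_cons,
        Matrix.cons_val_succ] <;>
      first
        | exact hB1 | exact hB2 | exact hA1 | exact hA2
        | exact hA1.neg | exact hA2.neg | exact hB1.neg | exact hB2.neg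
        | exact hRA1 | exact hRA2 | exact hRB1 | exact hRB2
        | exact hRA1.neg | exact hRA2.neg | exact hRB1.neg | exact hRB2.neg
  have hQint : ∀ i, Integrable (Q i) := by
    intro i
    fin_cases i <;>
      simp only [hQ, Matrix.cons_val_zero, Matrix.cons_val_one, Matrix.head_cons,
        Matrix.cons_val_succ] <;>
      first
        | exact hB1 | exact hB2 | exact hA1 | exact hA2
        | exact hRA1 | exact hRA2 | exact hRB1 | exact hRB2
  have claim1 : ∀ x y : ℝ, (∑ i, P i x * Q i y) ≤ 0 := by
    intro x y
    have hφpos : ∀ t, 0 < fX (μ + t) := fun t => hXpos _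
    have hφlc : LogConcaveFn (fun t => fX (μ + t)) := by
      constructor
      · exact convex_univ
      · intro a _ b _ p q hp hq hpq
        have h0 := hXlc.2 (mem_univ (μ + a)) (mem_univ (μ + b)) hp hq hpq
        have e : p * (μ + a) + q * (μ + b) = μ + (p * a + q * b) := by
          linear_combination μ * hpq
        simp only [smul_eq_mul] at h0 ⊢
        rw [← e]
        exact h0
    have hφeven : ∀ t, fX (μ + -t) = fX (μ + t) := by
      intro t
      rw [hXsym t, sub_eq_add_neg]
    have key := Pall hεpos hεlc hεeven hφpos hφlc
      (fun t => hφeven t) hσ hσ' (by linarith : s - μ ≤ 0) (s - x) (s - y)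
    have expand : (∑ i, P i x * Q i y) = (1/σ) * (1/σ') *
        (Kfun fε σ σ' (s - x) (s - y) *
          Wfun (fun t => fX (μ + t)) (s - μ) (s - x) (s - y)) := by
      simp only [hP, hQ, Fin.sum_univ_succ, Fin.sum_univ_zero, Matrix.cons_val_zero,
        Matrix.cons_val_one, Matrix.head_cons, Matrix.cons_val_succ, Ag, Bg, Kfun, Wfun]
      rw [show s - (2*s - x) = -(s - x) from by ring,
          show s - (2*s - y) = -(s - y) from by ring]
      simp only [neg_div, hεeven]
      rw [show μ + (s - μ - (s - x)) = x from by ring,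
          show μ + (s - μ - (s - y)) = y from by ring,
          show μ + (s - μ + (s - x)) = 2*s - x from by ring,
          show μ + (s - μ + (s - y)) = 2*s - y from by ring]
      ring
    rw [expand]
    exact mul_nonpos_iff.2 (Or.inl ⟨by positivity, key⟩)
  have claim3 : (∫ x, ∫ y, ∑ i, P i x * Q i y) ≤ 0 :=
    integral_nonpos fun x => integral_nonpos fun y => claim1 x y
  have claim2 : (∫ x, ∫ y, ∑ i, P i x * Q i y) =
      8 * ((∫ x, Bg fX fε s σ x) * (∫ x, Ag fX fε s σ' x) -
        (∫ x, Bg fX fε s σ' x) * (∫ x, Ag fX fε s σ x)) := by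
    rw [iter_double P Q hQint hPint]
    simp only [hP, hQ, Fin.sum_univ_succ, Fin.sum_univ_zero, Matrix.cons_val_zero,
      Matrix.cons_val_one, Matrix.head_cons, Matrix.cons_val_succ, integral_neg,
      my_integral_comp_sub (Ag fX fε s σ) (2*s), my_integral_comp_sub (Ag fX fε s σ') (2*s),
      my_integral_comp_sub (Bg fX fε s σ) (2*s), my_integral_comp_sub (Bg fX fε s σ') (2*s)]
    ring
  rw [claim2] at claim3
  linarith

lemma intAg (fX fε : ℝ → ℝ) (s τ : ℝ) (hXint : Integrable fX)
    (hεpos : ∀ x, 0 < fε x) (hεcont : Continuous fε) (hεlc : LogConcaveFn fε)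
    (hεeven : ∀ x, fε (-x) = fε x) (hτ : 0 < τ) : Integrable (Ag fX fε s τ) := by
  have hmax : ∀ t, fε t ≤ fε 0 := fun t => logconc_abs_anti hεpos hεlc hεeven (by simp)
  have hgb : ∀ t : ℝ, ‖1/τ * fε ((s - t)/τ)‖ ≤ 1/τ * fε 0 := by
    intro t
    rw [norm_eq_abs, abs_of_pos (mul_pos (by positivity) (hεpos _))]
    exact mul_le_mul_of_nonneg_left (hmax _) (by positivity)
  have hgcont : Continuous fun t : ℝ => 1/τ * fε ((s - t)/τ) :=
    continuous_const.mul (hεcont.comp ((continuous_const.sub continuous_id).div_const τ))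
  have h1 := hXint.bdd_mul hgcont.aestronglyMeasurable (Filter.Eventually.of_forall hgb)
  have h2 : Ag fX fε s τ = fun x => (1/τ * fε ((s - x)/τ)) * fX x :=
    funext fun x => by simp only [Ag]; ring
  rw [h2]; exact h1

lemma intBg (fX fε : ℝ → ℝ) (s τ : ℝ) (hXpos : ∀ x, 0 < fX x) (hXcont : Continuous fX)
    (hXm : Integrable (fun x => |x| * fX x))
    (hεpos : ∀ x, 0 < fε x) (hεcont : Continuous fε) (hεlc : LogConcaveFn fε)
    (hεeven : ∀ x, fε (-x) = fε x) (hτ : 0 < τ) : Integrable (Bg fX fε s τ) := by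
  have hmax : ∀ t, fε t ≤ fε 0 := fun t => logconc_abs_anti hεpos hεlc hεeven (by simp)
  have hgb : ∀ t : ℝ, ‖1/τ * fε ((s - t)/τ)‖ ≤ 1/τ * fε 0 := by
    intro t
    rw [norm_eq_abs, abs_of_pos (mul_pos (by positivity) (hεpos _))]
    exact mul_le_mul_of_nonneg_left (hmax _) (by positivity)
  have hgcont : Continuous fun t : ℝ => 1/τ * fε ((s - t)/τ) :=
    continuous_const.mul (hεcont.comp ((continuous_const.sub continuous_id).div_const τ))
  have hxfX : Integrable (fun t => t * fX t) := by
    have hc : Continuous (fun t : ℝ => t * fX t) := continuous_id.mul hXcont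
    apply hXm.mono' hc.aestronglyMeasurable
    filter_upwards with t
    rw [norm_eq_abs, abs_mul, abs_of_pos (hXpos t)]
  have h1 := hxfX.bdd_mul hgcont.aestronglyMeasurable (Filter.Eventually.of_forall hgb)
  have h2 : Bg fX fε s τ = fun x => (1/τ * fε ((s - x)/τ)) * (x * fX x) :=
    funext fun x => by simp only [Bg]; ring
  rw [h2]; exact h1

lemma Dpos (fX fε : ℝ → ℝ) (s τ : ℝ) (hXpos : ∀ x, 0 < fX x) (hXint : Integrable fX)
    (hεpos : ∀ x, 0 < fε x) (hεcont : Continuous fε) (hεlc : LogConcaveFn fε)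
    (hεeven : ∀ x, fε (-x) = fε x) (hτ : 0 < τ) : 0 < ∫ x, Ag fX fε s τ x := by
  have hint := intAg fX fε s τ hXint hεpos hεcont hεlc hεeven hτ
  have hnn : 0 ≤ Ag fX fε s τ := fun x =>
    le_of_lt (mul_pos (hXpos x) (mul_pos (by positivity) (hεpos _)))
  rw [integral_pos_iff_support_of_nonneg hnn hint]
  have hsupp : Function.support (Ag fX fε s τ) = Set.univ :=
    Set.eq_univ_of_forall fun x =>
      ne_of_gt (mul_pos (hXpos x) (mul_pos (by positivity) (hεpos _)))
  rw [hsupp]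
  simp

lemma Mlem (fX fε : ℝ → ℝ) (μ s τ : ℝ) (hXpos : ∀ x, 0 < fX x) (hXcont : Continuous fX)
    (hXint : Integrable fX) (hXm : Integrable (fun x => |x| * fX x))
    (hXsym : ∀ x, fX (μ + x) = fX (μ - x))
    (hεpos : ∀ x, 0 < fε x) (hεcont : Continuous fε) (hεlc : LogConcaveFn fε)
    (hεeven : ∀ x, fε (-x) = fε x) (hτ : 0 < τ) (hs : s ≤ μ) :
    (∫ x, Bg fX fε s τ x) ≤ μ * ∫ x, Ag fX fε s τ x := by
  have hAi := intAg fX fε s τ hXint hεpos hεcont hεlc hεeven hτ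
  have hBi := intBg fX fε s τ hXpos hXcont hXm hεpos hεcont hεlc hεeven hτ
  set h : ℝ → ℝ := fun x => (x - μ) * Ag fX fε s τ x with hdef
  have hhint : Integrable h := by
    apply (hBi.sub (hAi.const_mul μ)).congr
    filter_upwards with x
    simp only [Pi.sub_apply, hdef, Ag, Bg]; ring
  have hRint : Integrable (fun x => h (2*μ - x)) := my_integrable_comp_sub hhint _
  have hM : (∫ x, Bg fX fε s τ x) - μ * (∫ x, Ag fX fε s τ x) = ∫ x, h x := by
    rw [← integral_const_mul, ← integral_sub hBi (hAi.const_mul μ)]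
    congr 1
    funext x
    simp only [hdef, Ag, Bg]; ring
  have hdouble : (∫ x, h x) + (∫ x, h x) = ∫ x, (h x + h (2*μ - x)) := by
    rw [integral_add hhint hRint, my_integral_comp_sub h (2*μ)]
  have hkey : ∀ a b : ℝ, |a| ≤ |b| → fε (b/τ) ≤ fε (a/τ) := by
    intro a b hab
    apply logconc_abs_anti hεpos hεlc hεeven
    rw [abs_div, abs_div, abs_of_pos hτ]
    gcongr
  have hptwise : ∀ x, h x + h (2*μ - x) ≤ 0 := by
    intro x
    have hfx : fX (2*μ - x) = fX x := by
      rw [show 2*μ - x = μ + (μ - x) from by ring, hXsym, show μ - (μ - x) = x from by ring]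
    have hrw : h x + h (2*μ - x) =
        (x - μ) * fX x * (1/τ) * (fε ((s - x)/τ) - fε ((s - (2*μ - x))/τ)) := by
      simp only [hdef, Ag, hfx]; ring
    rw [hrw]
    rcases le_total x μ with hx | hx
    · have hd : fε ((s - (2*μ - x))/τ) ≤ fε ((s - x)/τ) := by
        apply hkey
        rw [abs_of_nonpos (by linarith : s - (2*μ - x) ≤ 0), abs_le]
        constructor <;> linarith
      refine mul_nonpos_iff.2 (Or.inr ⟨?_, sub_nonneg.2 hd⟩)
      exact mul_nonpos_iff.2 (Or.inr ⟨mul_nonpos_iff.2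
        (Or.inr ⟨by linarith, (hXpos x).le⟩), by positivity⟩)
    · have hd : fε ((s - x)/τ) ≤ fε ((s - (2*μ - x))/τ) := by
        apply hkey
        rw [abs_of_nonpos (by linarith : s - x ≤ 0), abs_le]
        constructor <;> linarith
      refine mul_nonpos_iff.2 (Or.inl ⟨?_, sub_nonpos.2 hd⟩)
      exact mul_nonneg (mul_nonneg (by linarith) (hXpos x).le) (by positivity)
  have hneg : (∫ x, h x) ≤ 0 := by
    have h1 : (∫ x, (h x + h (2*μ - x))) ≤ 0 := integral_nonpos fun x => hptwise x
    linarith [hdouble ▸ h1]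
  linarith [hM ▸ hneg]

lemma reflA (fX fε : ℝ → ℝ) (μ s τ : ℝ)
    (hXsym : ∀ x, fX (μ + x) = fX (μ - x)) (hεeven : ∀ x, fε (-x) = fε x) :
    (∫ x, Ag fX fε (2*μ - s) τ x) = ∫ x, Ag fX fε s τ x := by
  rw [← my_integral_comp_sub (Ag fX fε (2*μ - s) τ) (2*μ)]
  congr 1
  funext x
  simp only [Ag]
  rw [show 2*μ - x = μ + (μ - x) from by ring, hXsym, show μ - (μ - x) = x from by ring,
    show 2*μ - s - (μ + (μ - x)) = -(s - x) from by ring, neg_div, hεeven]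

lemma reflB (fX fε : ℝ → ℝ) (μ s τ : ℝ) (hXpos : ∀ x, 0 < fX x) (hXcont : Continuous fX)
    (hXint : Integrable fX) (hXm : Integrable (fun x => |x| * fX x))
    (hXsym : ∀ x, fX (μ + x) = fX (μ - x))
    (hεpos : ∀ x, 0 < fε x) (hεcont : Continuous fε) (hεlc : LogConcaveFn fε)
    (hεeven : ∀ x, fε (-x) = fε x) (hτ : 0 < τ) :
    (∫ x, Bg fX fε (2*μ - s) τ x) = 2*μ * (∫ x, Ag fX fε s τ x) - ∫ x, Bg fX fε s τ x := by
  have hAi := intAg fX fε s τ hXint hεpos hεcont hεlc hεeven hτ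
  have hBi := intBg fX fε s τ hXpos hXcont hXm hεpos hεcont hεlc hεeven hτ
  rw [← my_integral_comp_sub (Bg fX fε (2*μ - s) τ) (2*μ)]
  have e : (fun x => Bg fX fε (2*μ - s) τ (2*μ - x)) =
      fun x => 2*μ * Ag fX fε s τ x - Bg fX fε s τ x := by
    funext x
    simp only [Ag, Bg]
    rw [show 2*μ - x = μ + (μ - x) from by ring, hXsym, show μ - (μ - x) = x from by ring,
      show 2*μ - s - (μ + (μ - x)) = -(s - x) from by ring, neg_div, hεeven]
    ring
  rw [e, integral_sub ((hAi.const_mul (2*μ))) hBi, integral_const_mul]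


/-- Corollary 1: comparative statics in the scale parameter. -/
theorem locscale_comparative_statics
    (fX fε : ℝ → ℝ) (μ : ℝ)
    (hfX : IsDensity fX) (hfXsym : SymmAbout μ fX) (hfXlc : LogConcaveFn fX)
    (hμ : μ = ∫ x, x * fX x)
    (hfε : IsDensity fε) (hfεsym : SymmAbout 0 fε) (hfεlc : LogConcaveFn fε)
    (σ σ' : ℝ) (hσ : 0 < σ) (hσ' : σ < σ') :
    (∀ s ≤ μ, postMean fX (fun x => (1 / σ) * fε (x / σ)) s ≤
        postMean fX (fun x => (1 / σ') * fε (x / σ')) s ∧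
        postMean fX (fun x => (1 / σ') * fε (x / σ')) s ≤ μ) ∧
    (∀ s, μ ≤ s → μ ≤ postMean fX (fun x => (1 / σ') * fε (x / σ')) s ∧
        postMean fX (fun x => (1 / σ') * fε (x / σ')) s ≤
        postMean fX (fun x => (1 / σ) * fε (x / σ)) s) := by
  obtain ⟨hXpos, hXcd, hXone, hXm⟩ := hfX
  obtain ⟨hεpos, hεcd, hεone, hεm⟩ := hfε
  have hXcont : Continuous fX := hXcd.continuous
  have hεcont : Continuous fε := hεcd.continuous
  have hXint : Integrable fX := by
    by_contra hby
    rw [integral_undef hby] at hXone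
    norm_num at hXone
  have hXsym : ∀ x, fX (μ + x) = fX (μ - x) := hfXsym
  have hεeven : ∀ x, fε (-x) = fε x := by
    intro x
    have := hfεsym x
    rw [zero_add, zero_sub] at this
    exact this.symm
  have hσ'0 : 0 < σ' := hσ.trans hσ'
  have epm : ∀ τ s0 : ℝ, postMean fX (fun x => (1 / τ) * fε (x / τ)) s0 =
      (∫ x, Bg fX fε s0 τ x) / (∫ x, Ag fX fε s0 τ x) := fun τ s0 => rfl
  constructor
  · intro s hs
    have D1 := Dpos fX fε s σ hXpos hXint hεpos hεcont hfεlc hεeven hσ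
    have D2 := Dpos fX fε s σ' hXpos hXint hεpos hεcont hfεlc hεeven hσ'0
    have main := mainIneq fX fε μ s σ σ' hXpos hXcont hXint hXm hXsym hfXlc
      hεpos hεcont hεeven hfεlc hσ hσ' hs
    have M' := Mlem fX fε μ s σ' hXpos hXcont hXint hXm hXsym
      hεpos hεcont hfεlc hεeven hσ'0 hs
    constructor
    · rw [epm, epm, div_le_div_iff₀ D1 D2]
      exact main
    · rw [epm, div_le_iff₀ D2]
      exact M'
  · intro s hs
    have hs2 : 2*μ - s ≤ μ := by linarith
    have D1 := Dpos fX fε (2*μ - s) σ hXpos hXint hεpos hεcont hfεlc hεeven hσ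
    have D2 := Dpos fX fε (2*μ - s) σ' hXpos hXint hεpos hεcont hfεlc hεeven hσ'0
    have main := mainIneq fX fε μ (2*μ - s) σ σ' hXpos hXcont hXint hXm hXsym hfXlc
      hεpos hεcont hεeven hfεlc hσ hσ' hs2
    have M' := Mlem fX fε μ (2*μ - s) σ' hXpos hXcont hXint hXm hXsym
      hεpos hεcont hfεlc hεeven hσ'0 hs2
    have eA1 := reflA fX fε μ (2*μ - s) σ hXsym hεeven
    have eA2 := reflA fX fε μ (2*μ - s) σ' hXsym hεeven
    have eB1 := reflB fX fε μ (2*μ - s) σ hXpos hXcont hXint hXm hXsym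
      hεpos hεcont hfεlc hεeven hσ
    have eB2 := reflB fX fε μ (2*μ - s) σ' hXpos hXcont hXint hXm hXsym
      hεpos hεcont hfεlc hεeven hσ'0
    rw [show 2*μ - (2*μ - s) = s from by ring] at eA1 eA2 eB1 eB2
    constructor
    · rw [epm, eA2, eB2, le_div_iff₀ D2]
      linarith
    · rw [epm, epm, eA1, eA2, eB1, eB2, div_le_div_iff₀ D2 D1]
      linarith
end
end

section
/- A more precise prior attenuates updating (Corollary 2). Let f_ε be a log-concave density symmetric about 0. Let f_X and f_X̃ be quasi-concave densities, both symmetric about the same mean μ, such that f_X̃ is more precise than f_X, i.e., x ↦ f_X(μ+x)/f_X̃(μ+x) is nondecreasing on (0,∞). For a prior density h, let E_h[X|S=s] denote the posterior mean under prior h and noise density f_ε. Then for every s ≤ μ, E_{f_X}[X|S=s] ≤ E_{f_X̃}[X|S=s] ≤ μ, and for every s ≥ μ, E_{f_X}[X|S=s] ≥ E_{f_X̃}[X|S=s] ≥ μ. -/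
open MeasureTheory Real Set

noncomputable section

/-- Four-point concavity inequality. -/
lemma concave_four_s5 {L : ℝ → ℝ} (hL : ConcaveOn ℝ univ L) {A B C D : ℝ}
    (hAB : A ≤ B) (hAC : A ≤ C) (hsum : A + D = B + C) :
    L A + L D ≤ L B + L C := by
  have hBD : B ≤ D := by linarith
  have hCD : C ≤ D := by linarith
  rcases eq_or_lt_of_le (le_trans hAB hBD) with hAD | hAD
  · have hB : B = A := le_antisymm (by linarith) hAB
    have hC : C = A := le_antisymm (by linarith) hAC
    rw [hB, hC, ← hAD]
  · set t := (B - A) / (D - A) with ht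
    have hDA : 0 < D - A := by linarith
    have ht0 : 0 ≤ t := div_nonneg (by linarith) hDA.le
    have ht1 : t ≤ 1 := (div_le_one hDA).mpr (by linarith)
    have hB : B = (1 - t) * A + t * D := by
      have h := div_mul_cancel₀ (B - A) hDA.ne'
      rw [← ht] at h
      linear_combination -h
    have hC : C = t * A + (1 - t) * D := by linear_combination -hsum - hB
    have h1 := hL.2 (mem_univ A) (mem_univ D) (by linarith : (0:ℝ) ≤ 1 - t) ht0 (by ring)
    have h2 := hL.2 (mem_univ A) (mem_univ D) ht0 (by linarith : (0:ℝ) ≤ 1 - t) (by ring)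
    simp only [smul_eq_mul] at h1 h2
    rw [hB, hC]
    linarith

/-- Symmetric log-concave noise is monotone in |x|. -/
lemma noise_mono {fε : ℝ → ℝ} (hpos : ∀ x, 0 < fε x) (hev : ∀ x, fε (-x) = fε x)
    (hlc : LogConcaveFn fε) {a b : ℝ} (h : |a| ≤ |b|) : fε b ≤ fε a := by
  have key : ∀ u v : ℝ, 0 ≤ u → u ≤ v → fε v ≤ fε u := by
    intro u v hu huv
    have h4 := concave_four_s5 (L := fun x => Real.log (fε x)) hlc
      (A := -v) (B := u) (C := -u) (D := v) (by linarith) (by linarith) (by ring)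
    rw [hev v, hev u] at h4
    have hlog : Real.log (fε v) ≤ Real.log (fε u) := by linarith
    calc fε v = Real.exp (Real.log (fε v)) := (Real.exp_log (hpos v)).symm
    _ ≤ Real.exp (Real.log (fε u)) := Real.exp_le_exp.mpr hlog
    _ = fε u := Real.exp_log (hpos u)
  have h1 : fε b = fε |b| := by
    rcases abs_choice b with hb | hb
    · rw [hb]
    · rw [hb, hev]
  have h2 : fε a = fε |a| := by
    rcases abs_choice a with ha | ha
    · rw [ha]
    · rw [ha, hev]
  rw [h1, h2]
  exact key _ _ (abs_nonneg a) h

/-- Four-point TP2-type inequality for symmetric log-concave noise. -/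
lemma noise_four {fε : ℝ → ℝ} (hpos : ∀ x, 0 < fε x) (hev : ∀ x, fε (-x) = fε x)
    (hlc : LogConcaveFn fε) {c y z : ℝ} (hc : c ≤ 0) (hz : 0 < z) (hzy : z ≤ y) :
    fε (c - y) * fε (c + z) ≤ fε (c - z) * fε (c + y) := by
  have h4 := concave_four_s5 (L := fun x => Real.log (fε x)) hlc
    (A := c + z) (B := c + y) (C := z - c) (D := y - c) (by linarith) (by linarith) (by ring)
  have e1 : fε (c - y) = fε (y - c) := by rw [← hev (y - c)]; ring_nf
  have e2 : fε (c - z) = fε (z - c) := by rw [← hev (z - c)]; ring_nf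
  rw [e1, e2]
  have hsum1 : Real.log (fε (y - c) * fε (c + z)) ≤ Real.log (fε (z - c) * fε (c + y)) := by
    rw [Real.log_mul (hpos _).ne' (hpos _).ne', Real.log_mul (hpos _).ne' (hpos _).ne']
    linarith
  have hp1 : 0 < fε (y - c) * fε (c + z) := mul_pos (hpos _) (hpos _)
  calc fε (y - c) * fε (c + z) = Real.exp (Real.log (fε (y - c) * fε (c + z))) :=
        (Real.exp_log hp1).symm
  _ ≤ Real.exp (Real.log (fε (z - c) * fε (c + y))) := Real.exp_le_exp.mpr hsum1
  _ = fε (z - c) * fε (c + y) := Real.exp_log (mul_pos (hpos _) (hpos _))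

/-- Folding an integral over ℝ at 0. -/
lemma fold_integral {G : ℝ → ℝ} (hG : Integrable G) :
    ∫ x, G x = ∫ x in Ioi (0:ℝ), (G x + G (-x)) := by
  have hGneg : Integrable (fun x => G (-x)) := hG.comp_neg
  have h1 : ∫ x in Iic (0:ℝ), G x = ∫ x in Ioi (0:ℝ), G (-x) := by
    have := integral_comp_neg_Iic (0:ℝ) (fun x => G (-x))
    simp only [neg_neg, neg_zero] at this
    exact this
  rw [← intervalIntegral.integral_Iic_add_Ioi (b := (0:ℝ)) hG.integrableOn hG.integrableOn, h1,
    ← integral_add hGneg.integrableOn hG.integrableOn]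
  congr 1
  ext x
  ring

lemma foldInt {G : ℝ → ℝ} (hG : Integrable G) :
    IntegrableOn (fun x => G x + G (-x)) (Ioi (0:ℝ)) :=
  hG.integrableOn.add hG.comp_neg.integrableOn


/-- Chebyshev-type product comparison from a.e. pointwise positivity on the product. -/
lemma cheb {ν : Measure ℝ} [SFinite ν] {A B A' B' : ℝ → ℝ}
    (hA : Integrable A ν) (hB : Integrable B ν) (hA' : Integrable A' ν) (hB' : Integrable B' ν)
    (hK : ∀ᵐ p ∂(ν.prod ν),
      0 ≤ A' p.1 * B' p.2 + B' p.1 * A' p.2 - (A p.1 * B p.2 + B p.1 * A p.2)) :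
    (∫ x, A x ∂ν) * (∫ x, B x ∂ν) ≤ (∫ x, A' x ∂ν) * (∫ x, B' x ∂ν) := by
  have i1 : Integrable (fun p : ℝ × ℝ => A' p.1 * B' p.2) (ν.prod ν) := hA'.mul_prod hB'
  have i2 : Integrable (fun p : ℝ × ℝ => B' p.1 * A' p.2) (ν.prod ν) := hB'.mul_prod hA'
  have i3 : Integrable (fun p : ℝ × ℝ => A p.1 * B p.2) (ν.prod ν) := hA.mul_prod hB
  have i4 : Integrable (fun p : ℝ × ℝ => B p.1 * A p.2) (ν.prod ν) := hB.mul_prod hA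
  have h0 : 0 ≤ ∫ p : ℝ × ℝ,
      (A' p.1 * B' p.2 + B' p.1 * A' p.2 - (A p.1 * B p.2 + B p.1 * A p.2)) ∂(ν.prod ν) :=
    integral_nonneg_of_ae hK
  have i12 : Integrable (fun p : ℝ × ℝ => A' p.1 * B' p.2 + B' p.1 * A' p.2) (ν.prod ν) := by
    exact i1.add i2
  have i34 : Integrable (fun p : ℝ × ℝ => A p.1 * B p.2 + B p.1 * A p.2) (ν.prod ν) := by
    exact i3.add i4
  rw [integral_sub i12 i34, integral_add i1 i2, integral_add i3 i4,
    integral_prod_mul, integral_prod_mul, integral_prod_mul, integral_prod_mul] at h0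
  nlinarith [mul_comm (∫ x, B' x ∂ν) (∫ x, A' x ∂ν), mul_comm (∫ x, B x ∂ν) (∫ x, A x ∂ν)]

/-- The key comparison inequality on the folded half-line integrals. -/
lemma key_comparison {fε a b : ℝ → ℝ} {c : ℝ}
    (hpos : ∀ x, 0 < fε x) (hev : ∀ x, fε (-x) = fε x) (hlc : LogConcaveFn fε)
    (hc : c ≤ 0)
    (hapos : ∀ x, 0 < a x) (hbpos : ∀ x, 0 < b x)
    (hmono : MonotoneOn (fun x => a x / b x) (Ioi 0))
    (hIA : IntegrableOn (fun y => y * a y * (fε (c - y) - fε (c + y))) (Ioi 0))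
    (hIA' : IntegrableOn (fun y => y * b y * (fε (c - y) - fε (c + y))) (Ioi 0))
    (hIB : IntegrableOn (fun y => b y * (fε (c - y) + fε (c + y))) (Ioi 0))
    (hIB' : IntegrableOn (fun y => a y * (fε (c - y) + fε (c + y))) (Ioi 0)) :
    (∫ y in Ioi (0:ℝ), y * a y * (fε (c - y) - fε (c + y))) *
      (∫ y in Ioi (0:ℝ), b y * (fε (c - y) + fε (c + y)))
    ≤ (∫ y in Ioi (0:ℝ), y * b y * (fε (c - y) - fε (c + y))) *
      (∫ y in Ioi (0:ℝ), a y * (fε (c - y) + fε (c + y))) := by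
  apply cheb hIA hIB hIA' hIB'
  rw [show (volume.restrict (Ioi (0:ℝ))).prod (volume.restrict (Ioi (0:ℝ)))
      = (volume.prod volume).restrict ((Ioi (0:ℝ)) ×ˢ (Ioi (0:ℝ))) from
      Measure.prod_restrict _ _,
    ae_restrict_iff' (measurableSet_Ioi.prod measurableSet_Ioi)]
  apply Filter.Eventually.of_forall
  rintro ⟨y, z⟩ hyz0
  obtain ⟨hy, hz⟩ : (0:ℝ) < y ∧ (0:ℝ) < z := by
    simpa [Set.mem_prod] using hyz0
  simp only
  have key : y * b y * (fε (c - y) - fε (c + y)) * (a z * (fε (c - z) + fε (c + z)))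
      + a y * (fε (c - y) + fε (c + y)) * (z * b z * (fε (c - z) - fε (c + z)))
      - (y * a y * (fε (c - y) - fε (c + y)) * (b z * (fε (c - z) + fε (c + z)))
        + b y * (fε (c - y) + fε (c + y)) * (z * a z * (fε (c - z) - fε (c + z))))
      = (a y * b z - a z * b y) *
        (y * (fε (c + y) - fε (c - y)) * (fε (c - z) + fε (c + z))
          - z * (fε (c + z) - fε (c - z)) * (fε (c - y) + fε (c + y))) := by ring
  rw [key]
  have habs : ∀ w : ℝ, 0 < w → fε (c - w) ≤ fε (c + w) := by
    intro w hw
    apply noise_mono hpos hev hlc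
    have h1 : |c - w| = w - c := by rw [abs_of_nonpos (by linarith)]; ring
    rw [h1, abs_le]
    constructor <;> linarith
  rcases le_total z y with hzy | hyz
  · apply mul_nonneg
    · have := hmono (mem_Ioi.mpr hz) (mem_Ioi.mpr hy) hzy
      rw [div_le_div_iff₀ (hbpos z) (hbpos y)] at this
      linarith
    · have h2 := noise_four hpos hev hlc hc hz hzy
      have h3 : fε (c - y) ≤ fε (c + y) := habs y hy
      have e1 : (fε (c + z) - fε (c - z)) * (fε (c - y) + fε (c + y))
          ≤ (fε (c + y) - fε (c - y)) * (fε (c - z) + fε (c + z)) := by nlinarith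
      have e2 : z * ((fε (c + z) - fε (c - z)) * (fε (c - y) + fε (c + y)))
          ≤ z * ((fε (c + y) - fε (c - y)) * (fε (c - z) + fε (c + z))) :=
        mul_le_mul_of_nonneg_left e1 hz.le
      have e3 : z * ((fε (c + y) - fε (c - y)) * (fε (c - z) + fε (c + z)))
          ≤ y * ((fε (c + y) - fε (c - y)) * (fε (c - z) + fε (c + z))) := by
        apply mul_le_mul_of_nonneg_right hzy
        have := hpos (c - z); have := hpos (c + z)
        nlinarith
      nlinarith
  · rw [show (a y * b z - a z * b y) *
        (y * (fε (c + y) - fε (c - y)) * (fε (c - z) + fε (c + z))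
          - z * (fε (c + z) - fε (c - z)) * (fε (c - y) + fε (c + y)))
      = (a z * b y - a y * b z) *
        (z * (fε (c + z) - fε (c - z)) * (fε (c - y) + fε (c + y))
          - y * (fε (c + y) - fε (c - y)) * (fε (c - z) + fε (c + z))) from by ring]
    apply mul_nonneg
    · have := hmono (mem_Ioi.mpr hy) (mem_Ioi.mpr hz) hyz
      rw [div_le_div_iff₀ (hbpos y) (hbpos z)] at this
      linarith
    · have h2 := noise_four hpos hev hlc hc hy hyz
      have h3 : fε (c - z) ≤ fε (c + z) := habs z hz
      have e1 : (fε (c + y) - fε (c - y)) * (fε (c - z) + fε (c + z))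
          ≤ (fε (c + z) - fε (c - z)) * (fε (c - y) + fε (c + y)) := by nlinarith
      have e2 : y * ((fε (c + y) - fε (c - y)) * (fε (c - z) + fε (c + z)))
          ≤ y * ((fε (c + z) - fε (c - z)) * (fε (c - y) + fε (c + y))) :=
        mul_le_mul_of_nonneg_left e1 hy.le
      have e3 : y * ((fε (c + z) - fε (c - z)) * (fε (c - y) + fε (c + y)))
          ≤ z * ((fε (c + z) - fε (c - z)) * (fε (c - y) + fε (c + y))) := by
        apply mul_le_mul_of_nonneg_right hyz
        have := hpos (c - y); have := hpos (c + y)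
        nlinarith
      nlinarith

lemma integral_shift (F : ℝ → ℝ) (a : ℝ) : ∫ x, F (a + x) = ∫ x, F x :=
  integral_add_left_eq_self (f := F) a

lemma integral_refl (F : ℝ → ℝ) (a : ℝ) : ∫ x, F (a - x) = ∫ x, F x := by
  have h1 : ∫ x, F (a - x) = ∫ x, F (a + x) := by
    rw [← integral_neg_eq_self (fun x => F (a + x)) volume]
    simp [sub_eq_add_neg]
  rw [h1, integral_shift]

lemma density_integrable {h : ℝ → ℝ} (hd : IsDensity h) : Integrable h := by
  by_contra hc
  have h1 := hd.2.2.1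
  rw [integral_undef hc] at h1
  norm_num at h1

lemma noise_bound {fε : ℝ → ℝ} (hpos : ∀ x, 0 < fε x) (hev : ∀ x, fε (-x) = fε x)
    (hlc : LogConcaveFn fε) : ∀ x, fε x ≤ fε 0 := fun x =>
  noise_mono hpos hev hlc (by simp)

lemma int_D {h fε : ℝ → ℝ} (hd : IsDensity h) (hfε : IsDensity fε)
    (hev : ∀ x, fε (-x) = fε x) (hlc : LogConcaveFn fε) (t : ℝ) :
    Integrable (fun x => h x * fε (t - x)) := by
  have hbound := noise_bound hfε.1 hev hlc
  apply Integrable.mono ((density_integrable hd).const_mul (fε 0))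
  · exact ((hd.2.1.continuous).mul
      ((hfε.2.1.continuous).comp (continuous_const.sub continuous_id))).aestronglyMeasurable
  · apply Filter.Eventually.of_forall
    intro x
    simp only [Real.norm_eq_abs]
    rw [abs_of_pos (mul_pos (hd.1 x) (hfε.1 _)), abs_of_pos (mul_pos (hfε.1 0) (hd.1 x))]
    have := hbound (t - x)
    nlinarith [hd.1 x, hfε.1 (t - x)]

lemma int_N {h fε : ℝ → ℝ} (hd : IsDensity h) (hfε : IsDensity fε)
    (hev : ∀ x, fε (-x) = fε x) (hlc : LogConcaveFn fε) (t : ℝ) :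
    Integrable (fun x => x * h x * fε (t - x)) := by
  have hbound := noise_bound hfε.1 hev hlc
  apply Integrable.mono (hd.2.2.2.const_mul (fε 0))
  · exact ((continuous_id.mul hd.2.1.continuous).mul
      ((hfε.2.1.continuous).comp (continuous_const.sub continuous_id))).aestronglyMeasurable
  · apply Filter.Eventually.of_forall
    intro x
    simp only [Real.norm_eq_abs]
    rw [abs_of_nonneg (mul_nonneg (hfε.1 0).le (mul_nonneg (abs_nonneg x) (hd.1 x).le))]
    have h1 : |x * h x * fε (t - x)| = |x| * h x * fε (t - x) := by
      rw [abs_mul, abs_mul, abs_of_pos (hd.1 x), abs_of_pos (hfε.1 _)]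
    rw [h1]
    have := hbound (t - x)
    nlinarith [mul_le_mul_of_nonneg_left this (mul_nonneg (abs_nonneg x) (hd.1 x).le)]

lemma D_pos {h fε : ℝ → ℝ} {t : ℝ} (hp : ∀ x, 0 < h x) (hp2 : ∀ x, 0 < fε x)
    (hI : Integrable (fun x => h x * fε (t - x))) :
    0 < ∫ x, h x * fε (t - x) := by
  rw [integral_pos_iff_support_of_nonneg_ae
    (Filter.Eventually.of_forall fun x => (mul_pos (hp x) (hp2 _)).le) hI]
  have hs : (Function.support fun x => h x * fε (t - x)) = univ := by
    ext x
    simp only [Function.mem_support, mem_univ, iff_true]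
    exact (mul_pos (hp x) (hp2 (t - x))).ne'
  rw [hs]
  calc (0:ENNReal) < volume (Ioo (0:ℝ) 1) := by simp
  _ ≤ volume (univ : Set ℝ) := measure_mono (subset_univ _)

lemma fold_nonpos {fε k : ℝ → ℝ} {c : ℝ} (hpos : ∀ x, 0 < fε x)
    (hev : ∀ x, fε (-x) = fε x) (hlc : LogConcaveFn fε) (hc : c ≤ 0)
    (hk : ∀ y, 0 ≤ k y) (hkev : ∀ y, k (-y) = k y)
    (hI : Integrable (fun y => y * k y * fε (c - y))) :
    ∫ y, y * k y * fε (c - y) ≤ 0 := by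
  rw [fold_integral hI]
  apply setIntegral_nonpos measurableSet_Ioi
  intro y hy
  have e1 : -y * k (-y) * fε (c - -y) = -(y * k y * fε (c + y)) := by
    rw [hkev, show c - -y = c + y from by ring]; ring
  rw [e1]
  have h3 : fε (c - y) ≤ fε (c + y) := by
    apply noise_mono hpos hev hlc
    have hy' : (0:ℝ) < y := hy
    have h1 : |c - y| = y - c := by rw [abs_of_nonpos (by linarith)]; ring
    rw [h1, abs_le]
    constructor <;> linarith
  have hy' : (0:ℝ) < y := hy
  nlinarith [mul_le_mul_of_nonneg_left h3 (mul_nonneg hy'.le (hk y))]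

lemma reflect {h fε : ℝ → ℝ} {μ s : ℝ} (hev : ∀ x, fε (-x) = fε x) (hsym : SymmAbout μ h)
    (hIN : Integrable (fun x => x * h x * fε (s - x)))
    (hID : Integrable (fun x => h x * fε (s - x)))
    (hD : (∫ x, h x * fε (s - x)) ≠ 0) :
    postMean h fε (2*μ - s) = 2*μ - postMean h fε s := by
  have hsymm' : ∀ x, h (2*μ - x) = h x := by
    intro x
    have h1 := hsym (μ - x)
    have e1 : μ + (μ - x) = 2*μ - x := by ring
    have e2 : μ - (μ - x) = x := by ring
    rwa [e1, e2] at h1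
  have hN : ∫ x, x * h x * fε (2*μ - s - x)
      = 2*μ*(∫ x, h x * fε (s - x)) - ∫ x, x * h x * fε (s - x) := by
    have e1 : ∫ x, x * h x * fε (2*μ - s - x)
        = ∫ x, (2*μ - x) * h (2*μ - x) * fε (2*μ - s - (2*μ - x)) :=
      (integral_refl (fun x => x * h x * fε (2*μ - s - x)) (2*μ)).symm
    rw [e1]
    have e2 : (fun x => (2*μ - x) * h (2*μ - x) * fε (2*μ - s - (2*μ - x)))
        = fun x => 2*μ*(h x * fε (s - x)) - x * h x * fε (s - x) := by
      funext x
      rw [hsymm' x, show (2*μ - s - (2*μ - x)) = -(s - x) from by ring, hev]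
      ring
    rw [e2, integral_sub (hID.const_mul _) hIN, MeasureTheory.integral_const_mul]
  have hD2 : ∫ x, h x * fε (2*μ - s - x) = ∫ x, h x * fε (s - x) := by
    have e1 : ∫ x, h x * fε (2*μ - s - x)
        = ∫ x, h (2*μ - x) * fε (2*μ - s - (2*μ - x)) :=
      (integral_refl (fun x => h x * fε (2*μ - s - x)) (2*μ)).symm
    rw [e1]
    congr 1
    funext x
    rw [hsymm' x, show (2*μ - s - (2*μ - x)) = -(s - x) from by ring, hev (s - x)]
  unfold postMean
  rw [hN, hD2]
  field_simp

lemma post_le_mu {fε h : ℝ → ℝ} {μ s : ℝ} (hfε : IsDensity fε)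
    (hev : ∀ x, fε (-x) = fε x) (hlc : LogConcaveFn fε)
    (hd : IsDensity h) (hsym : SymmAbout μ h) (hs : s ≤ μ) :
    postMean h fε s ≤ μ := by
  have hID := int_D hd hfε hev hlc s
  have hIN := int_N hd hfε hev hlc s
  have hDpos := D_pos hd.1 hfε.1 hID
  have eF : (fun x => (x - μ) * h x * fε (s - x))
      = fun x => x * h x * fε (s - x) - μ * (h x * fε (s - x)) := by funext x; ring
  have IntF : Integrable (fun x => (x - μ) * h x * fε (s - x)) := by
    rw [eF]; exact hIN.sub (hID.const_mul μ)
  have eqF : ∫ x, (x - μ) * h x * fε (s - x)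
      = (∫ x, x * h x * fε (s - x)) - μ * ∫ x, h x * fε (s - x) := by
    rw [eF, integral_sub hIN (hID.const_mul μ), MeasureTheory.integral_const_mul]
  have etrans : (fun y => (fun x => (x - μ) * h x * fε (s - x)) (μ + y))
      = fun y => y * h (μ + y) * fε ((s - μ) - y) := by
    funext y
    simp only
    rw [show μ + y - μ = y from by ring, show s - (μ + y) = (s - μ) - y from by ring]
  have htrans : ∫ y, y * h (μ + y) * fε ((s - μ) - y) = ∫ x, (x - μ) * h x * fε (s - x) := by
    rw [← etrans]
    exact integral_shift (fun x => (x - μ) * h x * fε (s - x)) μ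
  have hIG : Integrable (fun y => y * h (μ + y) * fε ((s - μ) - y)) := by
    have := IntF.comp_add_left μ
    rwa [show (fun t => (fun x => (x - μ) * h x * fε (s - x)) (μ + t))
      = fun y => y * h (μ + y) * fε ((s - μ) - y) from etrans] at this
  have hnonpos : ∫ y, y * h (μ + y) * fε ((s - μ) - y) ≤ 0 := by
    apply fold_nonpos hfε.1 hev hlc (by linarith : s - μ ≤ 0)
      (fun y => (hd.1 (μ + y)).le) _ hIG
    intro y
    rw [show μ + -y = μ - y from by ring]
    exact (hsym y).symm
  rw [htrans, eqF] at hnonpos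
  unfold postMean
  rw [div_le_iff₀ hDpos]
  linarith

lemma fold_reps {h fε : ℝ → ℝ} {μ s : ℝ} (hfε : IsDensity fε)
    (hev : ∀ x, fε (-x) = fε x) (hlc : LogConcaveFn fε)
    (hd : IsDensity h) (hsym : SymmAbout μ h) :
    ((∫ x, x * h x * fε (s - x)) - μ * (∫ x, h x * fε (s - x))
        = ∫ y in Ioi (0:ℝ), y * h (μ + y) * (fε ((s - μ) - y) - fε ((s - μ) + y)))
    ∧ ((∫ x, h x * fε (s - x)) = ∫ y in Ioi (0:ℝ), h (μ + y) * (fε ((s - μ) - y) + fε ((s - μ) + y)))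
    ∧ IntegrableOn (fun y => y * h (μ + y) * (fε ((s - μ) - y) - fε ((s - μ) + y))) (Ioi 0)
    ∧ IntegrableOn (fun y => h (μ + y) * (fε ((s - μ) - y) + fε ((s - μ) + y))) (Ioi 0) := by
  have hID := int_D hd hfε hev hlc s
  have hIN := int_N hd hfε hev hlc s
  have hsymm : ∀ y : ℝ, h (μ - y) = h (μ + y) := fun y => (hsym y).symm
  -- numerator part
  have eF : (fun x => (x - μ) * h x * fε (s - x))
      = fun x => x * h x * fε (s - x) - μ * (h x * fε (s - x)) := by funext x; ring
  have IntF : Integrable (fun x => (x - μ) * h x * fε (s - x)) := by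
    rw [eF]; exact hIN.sub (hID.const_mul μ)
  have eqF : ∫ x, (x - μ) * h x * fε (s - x)
      = (∫ x, x * h x * fε (s - x)) - μ * ∫ x, h x * fε (s - x) := by
    rw [eF, integral_sub hIN (hID.const_mul μ), MeasureTheory.integral_const_mul]
  have etrans : (fun y => (fun x => (x - μ) * h x * fε (s - x)) (μ + y))
      = fun y => y * h (μ + y) * fε ((s - μ) - y) := by
    funext y
    simp only
    rw [show μ + y - μ = y from by ring, show s - (μ + y) = (s - μ) - y from by ring]
  have htrans : ∫ y, y * h (μ + y) * fε ((s - μ) - y) = ∫ x, (x - μ) * h x * fε (s - x) := by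
    rw [← etrans]; exact integral_shift (fun x => (x - μ) * h x * fε (s - x)) μ
  have hIG : Integrable (fun y => y * h (μ + y) * fε ((s - μ) - y)) := by
    have := IntF.comp_add_left μ
    rwa [show (fun t => (fun x => (x - μ) * h x * fε (s - x)) (μ + t))
      = fun y => y * h (μ + y) * fε ((s - μ) - y) from etrans] at this
  have efold : (fun y => y * h (μ + y) * fε ((s - μ) - y)
        + -y * h (μ + -y) * fε ((s - μ) - -y))
      = fun y => y * h (μ + y) * (fε ((s - μ) - y) - fε ((s - μ) + y)) := by
    funext y
    rw [show μ + -y = μ - y from by ring, hsymm y,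
      show (s - μ) - -y = (s - μ) + y from by ring]
    ring
  have rep1 : (∫ x, x * h x * fε (s - x)) - μ * (∫ x, h x * fε (s - x))
      = ∫ y in Ioi (0:ℝ), y * h (μ + y) * (fε ((s - μ) - y) - fε ((s - μ) + y)) := by
    rw [← eqF, ← htrans, fold_integral hIG]
    congr 1
  have int1 : IntegrableOn
      (fun y => y * h (μ + y) * (fε ((s - μ) - y) - fε ((s - μ) + y))) (Ioi 0) := by
    have := foldInt hIG
    rwa [show (fun y => y * h (μ + y) * fε ((s - μ) - y)
        + -y * h (μ + -y) * fε ((s - μ) - -y))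
      = fun y => y * h (μ + y) * (fε ((s - μ) - y) - fε ((s - μ) + y)) from efold] at this
  -- denominator part
  have etrans2 : (fun y => (fun x => h x * fε (s - x)) (μ + y))
      = fun y => h (μ + y) * fε ((s - μ) - y) := by
    funext y
    simp only
    rw [show s - (μ + y) = (s - μ) - y from by ring]
  have htrans2 : ∫ y, h (μ + y) * fε ((s - μ) - y) = ∫ x, h x * fε (s - x) := by
    rw [← etrans2]; exact integral_shift (fun x => h x * fε (s - x)) μ
  have hIG2 : Integrable (fun y => h (μ + y) * fε ((s - μ) - y)) := by
    have := hID.comp_add_left μ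
    rwa [show (fun t => (fun x => h x * fε (s - x)) (μ + t))
      = fun y => h (μ + y) * fε ((s - μ) - y) from etrans2] at this
  have efold2 : (fun y => h (μ + y) * fε ((s - μ) - y) + h (μ + -y) * fε ((s - μ) - -y))
      = fun y => h (μ + y) * (fε ((s - μ) - y) + fε ((s - μ) + y)) := by
    funext y
    rw [show μ + -y = μ - y from by ring, hsymm y,
      show (s - μ) - -y = (s - μ) + y from by ring]
    ring
  have rep2 : (∫ x, h x * fε (s - x))
      = ∫ y in Ioi (0:ℝ), h (μ + y) * (fε ((s - μ) - y) + fε ((s - μ) + y)) := by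
    rw [← htrans2, fold_integral hIG2]
    congr 1
  have int2 : IntegrableOn
      (fun y => h (μ + y) * (fε ((s - μ) - y) + fε ((s - μ) + y))) (Ioi 0) := by
    have := foldInt hIG2
    rwa [show (fun y => h (μ + y) * fε ((s - μ) - y) + h (μ + -y) * fε ((s - μ) - -y))
      = fun y => h (μ + y) * (fε ((s - μ) - y) + fε ((s - μ) + y)) from efold2] at this
  exact ⟨rep1, rep2, int1, int2⟩

lemma post_compare {fε fX fX' : ℝ → ℝ} {μ s : ℝ} (hfε : IsDensity fε)
    (hev : ∀ x, fε (-x) = fε x) (hlc : LogConcaveFn fε)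
    (hfX : IsDensity fX) (hfXsym : SymmAbout μ fX)
    (hfX' : IsDensity fX') (hfX'sym : SymmAbout μ fX')
    (hprec : MonotoneOn (fun x => fX (μ + x) / fX' (μ + x)) (Set.Ioi 0))
    (hs : s ≤ μ) :
    postMean fX fε s ≤ postMean fX' fε s := by
  obtain ⟨rep1a, rep2a, int1a, int2a⟩ := fold_reps (μ := μ) (s := s) hfε hev hlc hfX hfXsym
  obtain ⟨rep1b, rep2b, int1b, int2b⟩ := fold_reps (μ := μ) (s := s) hfε hev hlc hfX' hfX'sym
  have hDa := D_pos hfX.1 hfε.1 (int_D hfX hfε hev hlc s)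
  have hDb := D_pos hfX'.1 hfε.1 (int_D hfX' hfε hev hlc s)
  have key := key_comparison (a := fun y => fX (μ + y)) (b := fun y => fX' (μ + y))
    (c := s - μ) hfε.1 hev hlc (by linarith)
    (fun x => hfX.1 (μ + x)) (fun x => hfX'.1 (μ + x)) hprec int1a int1b int2b int2a
  unfold postMean
  rw [div_le_div_iff₀ hDa hDb]
  set NA := ∫ x, x * fX x * fε (s - x)
  set NB := ∫ x, x * fX' x * fε (s - x)
  set DA := ∫ x, fX x * fε (s - x)
  set DB := ∫ x, fX' x * fε (s - x)
  set AX := ∫ y in Ioi (0:ℝ), y * fX (μ + y) * (fε ((s - μ) - y) - fε ((s - μ) + y))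
  set AX' := ∫ y in Ioi (0:ℝ), y * fX' (μ + y) * (fε ((s - μ) - y) - fε ((s - μ) + y))
  set BX := ∫ y in Ioi (0:ℝ), fX (μ + y) * (fε ((s - μ) - y) + fε ((s - μ) + y))
  set BX' := ∫ y in Ioi (0:ℝ), fX' (μ + y) * (fε ((s - μ) - y) + fε ((s - μ) + y))
  have eNA : NA = μ * DA + AX := by rw [rep2a] at rep1a ⊢; linarith
  have eNB : NB = μ * DB + AX' := by rw [rep2b] at rep1b ⊢; linarith
  have eDA : DA = BX := rep2a
  have eDB : DB = BX' := rep2b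
  have hkey : AX * BX' ≤ AX' * BX := key
  calc NA * DB = μ * (DA * DB) + AX * BX' := by rw [eNA, eDB]; ring
  _ ≤ μ * (DA * DB) + AX' * BX := by linarith
  _ = NB * DA := by rw [eNB, eDA]; ring

/-- Corollary 2: a more precise prior attenuates updating. -/
theorem more_precise_prior_attenuates
    (fε fX fX' : ℝ → ℝ) (μ : ℝ)
    (hfε : IsDensity fε) (hfεsym : SymmAbout 0 fε) (hfεlc : LogConcaveFn fε)
    (hfX : IsDensity fX) (hfXsym : SymmAbout μ fX) (hfXqc : QuasiConcaveFn fX)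
    (hfX' : IsDensity fX') (hfX'sym : SymmAbout μ fX') (hfX'qc : QuasiConcaveFn fX')
    (hμ : μ = ∫ x, x * fX x) (hμ' : μ = ∫ x, x * fX' x)
    (hprec : MonotoneOn (fun x => fX (μ + x) / fX' (μ + x)) (Set.Ioi 0)) :
    (∀ s ≤ μ, postMean fX fε s ≤ postMean fX' fε s ∧ postMean fX' fε s ≤ μ) ∧
    (∀ s, μ ≤ s → μ ≤ postMean fX' fε s ∧ postMean fX' fε s ≤ postMean fX fε s) := by
  have hev : ∀ x, fε (-x) = fε x := by
    intro x
    have h1 := hfεsym x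
    simp only [zero_add, zero_sub] at h1
    exact h1.symm
  constructor
  · intro s hs
    exact ⟨post_compare hfε hev hfεlc hfX hfXsym hfX' hfX'sym hprec hs,
      post_le_mu hfε hev hfεlc hfX' hfX'sym hs⟩
  · intro s hs
    set u := 2*μ - s with hu
    have hu' : u ≤ μ := by rw [hu]; linarith
    have hrefl : ∀ (h : ℝ → ℝ), IsDensity h → SymmAbout μ h →
        postMean h fε s = 2*μ - postMean h fε u := by
      intro h hd hsym
      have hr := reflect (μ := μ) (s := u) hev hsym (int_N hd hfε hev hfεlc u)
        (int_D hd hfε hev hfεlc u) (D_pos hd.1 hfε.1 (int_D hd hfε hev hfεlc u)).ne'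
      rwa [show 2*μ - u = s from by rw [hu]; ring] at hr
    have h1 := post_le_mu hfε hev hfεlc hfX' hfX'sym hu'
    have h2 := post_compare hfε hev hfεlc hfX hfXsym hfX' hfX'sym hprec hu'
    rw [hrefl fX hfX hfXsym, hrefl fX' hfX' hfX'sym]
    constructor <;> linarith
end
end

section
/- Scaling down the prior attenuates updating (Corollary 3). Let f_X be a log-concave density symmetric about 0 (so the prior mean is 0), and let f_ε be a log-concave density symmetric about 0. For k > 0, let E_k[s] denote the posterior mean under the scaled prior density x ↦ (1/k)·f_X(x/k) and noise density f_ε. Then for all 0 < k̃ < k: for every s ≤ 0, E_k[s] ≤ E_k̃[s] ≤ 0, and for every s ≥ 0, E_k[s] ≥ E_k̃[s] ≥ 0. -/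
open MeasureTheory Real Set

noncomputable section

lemma four_pt {L : ℝ → ℝ} (hL : ConcaveOn ℝ Set.univ L) {a b c d : ℝ}
    (hab : a ≤ b) (hbd : b ≤ d) (hac : a ≤ c) (hsum : a + d = b + c) :
    L a + L d ≤ L b + L c := by
  rcases eq_or_lt_of_le (hab.trans hbd) with h | h
  · have hb : b = a := le_antisymm (h ▸ hbd) hab
    have hc : c = d := by linarith
    rw [hb, hc]
  · have hd0 : 0 < d - a := by linarith
    set t : ℝ := (d - b) / (d - a) with ht
    have ht0 : 0 ≤ t := div_nonneg (by linarith) hd0.le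
    have ht1 : 0 ≤ 1 - t := by
      have : t ≤ 1 := by rw [ht, div_le_one hd0]; linarith
      linarith
    have key : t * (d - a) = d - b := div_mul_cancel₀ _ hd0.ne'
    have hb' : t * a + (1 - t) * d = b := by nlinarith [key]
    have hc' : (1 - t) * a + t * d = c := by nlinarith [key]
    have h1 := hL.2 (mem_univ a) (mem_univ d) ht0 ht1 (by ring)
    have h2 := hL.2 (mem_univ a) (mem_univ d) ht1 ht0 (by ring)
    simp only [smul_eq_mul] at h1 h2
    rw [hb'] at h1
    rw [hc'] at h2
    linarith

lemma anti_of_concave_even {L : ℝ → ℝ} (hL : ConcaveOn ℝ Set.univ L)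
    (he : ∀ x, L (-x) = L x) {a b : ℝ} (h0 : 0 ≤ a) (hab : a ≤ b) : L b ≤ L a := by
  rcases eq_or_lt_of_le (h0.trans hab) with h | hb0
  · have ha : a = 0 := le_antisymm (h ▸ hab) h0
    have hb : b = 0 := h.symm
    rw [ha, hb]
  · set t : ℝ := (a + b) / (2 * b) with htdef
    have ht0 : 0 ≤ t := div_nonneg (by linarith) (by linarith)
    have ht1 : 0 ≤ 1 - t := by
      have : t ≤ 1 := by rw [htdef, div_le_one (by linarith)]; linarith
      linarith
    have h1 := hL.2 (mem_univ b) (mem_univ (-b)) ht0 ht1 (by ring)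
    simp only [smul_eq_mul] at h1
    have harg : t * b + (1 - t) * (-b) = a := by
      field_simp [htdef]
      have key : t * (2 * b) = a + b := div_mul_cancel₀ _ (by positivity)
      linarith [key]
    rw [harg, he b] at h1
    nlinarith [h1]

lemma mul_le_mul_of_log {x y x' y' : ℝ} (hx : 0 < x) (hy : 0 < y) (hx' : 0 < x') (hy' : 0 < y')
    (h : Real.log x + Real.log y ≤ Real.log x' + Real.log y') : x * y ≤ x' * y' := by
  have h2 := Real.exp_le_exp.2 h
  rwa [Real.exp_add, Real.exp_add, Real.exp_log hx, Real.exp_log hy, Real.exp_log hx',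
    Real.exp_log hy'] at h2

lemma cross_even {φ : ℝ → ℝ} (hpos : ∀ x, 0 < φ x) (hlc : LogConcaveFn φ)
    (he : ∀ x, φ (-x) = φ x) {s u v : ℝ} (hs : 0 ≤ s) (huv : u ≤ v) :
    φ (s - u) * φ (s + v) ≤ φ (s - v) * φ (s + u) := by
  apply mul_le_mul_of_log (hpos _) (hpos _) (hpos _) (hpos _)
  have h1 : Real.log (φ (s - u)) = Real.log (φ (u - s)) := by
    rw [show s - u = -(u - s) by ring, he]
  have h2 : Real.log (φ (s - v)) = Real.log (φ (v - s)) := by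
    rw [show s - v = -(v - s) by ring, he]
  rw [h1, h2]
  have h4 := four_pt hlc (a := u - s) (b := v - s) (c := s + u) (d := s + v)
    (by linarith) (by linarith) (by linarith) (by ring)
  simpa using h4

lemma f_cross {f : ℝ → ℝ} (hpos : ∀ x, 0 < f x) (hlc : LogConcaveFn f)
    (he : ∀ x, f (-x) = f x) {k k' u v : ℝ} (hk' : 0 < k') (hk : k' < k)
    (hu : 0 < u) (huv : u ≤ v) :
    f (u / k) * f (v / k') ≤ f (v / k) * f (u / k') := by
  have hk0 : 0 < k := hk'.trans hk
  apply mul_le_mul_of_log (hpos _) (hpos _) (hpos _) (hpos _)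
  have heL : ∀ x, Real.log (f (-x)) = Real.log (f x) := fun x => by rw [he]
  have hp12 : u / k ≤ v / k := by gcongr
  have hpq : u / k ≤ u / k' := by
    rw [div_le_div_iff₀ hk0 hk']; nlinarith
  have hgap : v / k - u / k ≤ v / k' - u / k' := by
    rw [div_sub_div_same, div_sub_div_same, div_le_div_iff₀ hk0 hk']
    nlinarith
  have hstep : Real.log (f (v / k')) ≤ Real.log (f (u / k' + v / k - u / k)) := by
    apply anti_of_concave_even hlc heL
    · have := div_pos hu hk'; linarith [hp12]
    · linarith
  have h4 := four_pt hlc (a := u / k) (b := v / k) (c := u / k') (d := u / k' + v / k - u / k)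
    hp12 (by linarith) hpq (by ring)
  linarith

lemma pointwise_key_aux {f φ : ℝ → ℝ} (hfpos : ∀ x, 0 < f x) (hflc : LogConcaveFn f)
    (hfe : ∀ x, f (-x) = f x)
    (hφpos : ∀ x, 0 < φ x) (hφlc : LogConcaveFn φ) (hφe : ∀ x, φ (-x) = φ x)
    {k k' s : ℝ} (hk' : 0 < k') (hk : k' < k) (hs : 0 ≤ s) {u v : ℝ}
    (hu : 0 < u) (hv : 0 < v) (huv : u ≤ v) :
    0 ≤ (u * (1/k * f (u/k)) * (φ (s-u) - φ (s+u))) * (1/k' * f (v/k') * (φ (s-v) + φ (s+v)))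
       + (1/k' * f (u/k') * (φ (s-u) + φ (s+u))) * (v * (1/k * f (v/k)) * (φ (s-v) - φ (s+v)))
       - (u * (1/k' * f (u/k')) * (φ (s-u) - φ (s+u))) * (1/k * f (v/k) * (φ (s-v) + φ (s+v)))
       - (1/k * f (u/k) * (φ (s-u) + φ (s+u))) * (v * (1/k' * f (v/k')) * (φ (s-v) - φ (s+v))) := by
  have hk0 : 0 < k := hk'.trans hk
  have h1 : f (u/k) * f (v/k') ≤ f (v/k) * f (u/k') :=
    f_cross hfpos hflc hfe hk' hk hu huv
  have hc : φ (s - u) * φ (s + v) ≤ φ (s - v) * φ (s + u) :=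
    cross_even hφpos hφlc hφe hs huv
  have hd2 : 0 ≤ φ (s - v) - φ (s + v) := by
    have h0 := cross_even hφpos hφlc hφe hs (le_of_lt hv : (0:ℝ) ≤ v)
    simp only [sub_zero, add_zero] at h0
    nlinarith [hφpos s]
  have e1pos : 0 < φ (s - u) + φ (s + u) := add_pos (hφpos _) (hφpos _)
  have step1 : (φ (s-u) - φ (s+u)) * (φ (s-v) + φ (s+v)) ≤
      (φ (s-v) - φ (s+v)) * (φ (s-u) + φ (s+u)) := by nlinarith [hc]
  have step2 : u * ((φ (s-u) - φ (s+u)) * (φ (s-v) + φ (s+v))) ≤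
      u * ((φ (s-v) - φ (s+v)) * (φ (s-u) + φ (s+u))) :=
    mul_le_mul_of_nonneg_left step1 hu.le
  have step3 : u * ((φ (s-v) - φ (s+v)) * (φ (s-u) + φ (s+u))) ≤
      v * ((φ (s-v) - φ (s+v)) * (φ (s-u) + φ (s+u))) :=
    mul_le_mul_of_nonneg_right huv (mul_nonneg hd2 e1pos.le)
  have factor :
      (u * (1/k * f (u/k)) * (φ (s-u) - φ (s+u))) * (1/k' * f (v/k') * (φ (s-v) + φ (s+v)))
     + (1/k' * f (u/k') * (φ (s-u) + φ (s+u))) * (v * (1/k * f (v/k)) * (φ (s-v) - φ (s+v)))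
     - (u * (1/k' * f (u/k')) * (φ (s-u) - φ (s+u))) * (1/k * f (v/k) * (φ (s-v) + φ (s+v)))
     - (1/k * f (u/k) * (φ (s-u) + φ (s+u))) * (v * (1/k' * f (v/k')) * (φ (s-v) - φ (s+v)))
     = (1/(k*k')) * ((f (v/k) * f (u/k') - f (u/k) * f (v/k')) *
        (v * ((φ (s-v) - φ (s+v)) * (φ (s-u) + φ (s+u)))
          - u * ((φ (s-u) - φ (s+u)) * (φ (s-v) + φ (s+v))))) := by
    field_simp
    ring
  rw [factor]
  apply mul_nonneg (by positivity)
  apply mul_nonneg (by linarith) (by linarith)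


lemma pointwise_key {f φ : ℝ → ℝ} (hfpos : ∀ x, 0 < f x) (hflc : LogConcaveFn f)
    (hfe : ∀ x, f (-x) = f x)
    (hφpos : ∀ x, 0 < φ x) (hφlc : LogConcaveFn φ) (hφe : ∀ x, φ (-x) = φ x)
    {k k' s : ℝ} (hk' : 0 < k') (hk : k' < k) (hs : 0 ≤ s) {u v : ℝ}
    (hu : 0 < u) (hv : 0 < v) :
    0 ≤ (u * (1/k * f (u/k)) * (φ (s-u) - φ (s+u))) * (1/k' * f (v/k') * (φ (s-v) + φ (s+v)))
       + (1/k' * f (u/k') * (φ (s-u) + φ (s+u))) * (v * (1/k * f (v/k)) * (φ (s-v) - φ (s+v)))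
       - (u * (1/k' * f (u/k')) * (φ (s-u) - φ (s+u))) * (1/k * f (v/k) * (φ (s-v) + φ (s+v)))
       - (1/k * f (u/k) * (φ (s-u) + φ (s+u))) * (v * (1/k' * f (v/k')) * (φ (s-v) - φ (s+v))) := by
  rcases le_total u v with huv | hvu
  · exact pointwise_key_aux hfpos hflc hfe hφpos hφlc hφe hk' hk hs hu hv huv
  · have h := pointwise_key_aux hfpos hflc hfe hφpos hφlc hφe hk' hk hs hv hu hvu
    linarith [h]

lemma integrable_mul_bdd {g h : ℝ → ℝ} (hg : Integrable g) (hh : Continuous h)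
    {C : ℝ} (hC : ∀ x, |h x| ≤ C) : Integrable (fun x => g x * h x) := by
  have := hg.bdd_mul hh.aestronglyMeasurable (Filter.Eventually.of_forall fun x => by
    simpa [Real.norm_eq_abs] using hC x)
  simpa [mul_comm] using this

lemma scaled_integrable {f : ℝ → ℝ} (hf : Integrable f) {k : ℝ} (hk : 0 < k) :
    Integrable (fun x => 1/k * f (x/k)) := by
  have h1 : Integrable (fun x => f (1/k * x)) := hf.comp_mul_left' (by positivity)
  have h2 := h1.const_mul (1/k)
  have heq : (fun x => 1/k * f (x/k)) = fun x => 1/k * f (1/k * x) := by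
    funext x; rw [show (1:ℝ)/k * x = x / k from by ring]
  rw [heq]; exact h2

lemma scaled_moment {f : ℝ → ℝ} (hm : Integrable (fun x => |x| * f x)) {k : ℝ} (hk : 0 < k) :
    Integrable (fun x => |x| * (1/k * f (x/k))) := by
  have h1 : Integrable (fun x => |1/k * x| * f (1/k * x)) := hm.comp_mul_left' (by positivity)
  have heq : (fun x => |x| * (1/k * f (x/k))) = fun x => |1/k * x| * f (1/k * x) := by
    funext x
    rw [show (1:ℝ)/k * x = x / k from by ring, abs_div, abs_of_pos hk]
    ring
  rw [heq]; exact h1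

lemma bounded_of_logconcave_even {φ : ℝ → ℝ} (hpos : ∀ x, 0 < φ x) (hlc : LogConcaveFn φ)
    (he : ∀ x, φ (-x) = φ x) : ∀ x, φ x ≤ φ 0 := by
  intro x
  have h1 := hlc.2 (mem_univ x) (mem_univ (-x)) (by norm_num : (0:ℝ) ≤ 1/2)
    (by norm_num : (0:ℝ) ≤ 1/2) (by norm_num)
  simp only [smul_eq_mul] at h1
  rw [show (1/2 : ℝ) * x + 1/2 * (-x) = 0 by ring] at h1
  rw [show Real.log (φ (-x)) = Real.log (φ x) from by rw [he]] at h1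
  have h2 : Real.log (φ x) ≤ Real.log (φ 0) := by linarith
  have h3 := Real.exp_le_exp.2 h2
  rwa [Real.exp_log (hpos _), Real.exp_log (hpos _)] at h3

lemma split_pos {g : ℝ → ℝ} (hg : Integrable g) :
    ∫ x, g x = ∫ x in Ioi (0:ℝ), (g (-x) + g x) := by
  have h2 : ∫ x in Iic (0:ℝ), g x = ∫ x in Ioi (0:ℝ), g (-x) := by
    have h := integral_comp_neg_Iic (0:ℝ) (fun x => g (-x))
    simp only [neg_neg, neg_zero] at h
    exact h
  rw [← intervalIntegral.integral_Iic_add_Ioi (b := (0:ℝ)) hg.integrableOn hg.integrableOn, h2,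
    ← integral_add hg.comp_neg.integrableOn hg.integrableOn]

lemma rep (f φ : ℝ → ℝ)
    (hfpos : ∀ x, 0 < f x) (hfint : Integrable f) (hfmom : Integrable (fun x => |x| * f x))
    (hfe : ∀ x, f (-x) = f x) (hfcont : Continuous f)
    (hφpos : ∀ x, 0 < φ x) (hφcont : Continuous φ) (hφbd : ∀ x, φ x ≤ φ 0)
    (hφe : ∀ x, φ (-x) = φ x)
    {k : ℝ} (hk : 0 < k) (s : ℝ) :
    Integrable (fun x => 1/k * f (x/k) * φ (s - x)) ∧
    Integrable (fun x => x * (1/k * f (x/k)) * φ (s - x)) ∧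
    0 < (∫ x, 1/k * f (x/k) * φ (s - x)) ∧
    (∫ x, 1/k * f (x/k) * φ (s - x)) = ∫ x in Ioi 0, 1/k * f (x/k) * (φ (s-x) + φ (s+x)) ∧
    (∫ x, x * (1/k * f (x/k)) * φ (s - x))
      = ∫ x in Ioi 0, x * (1/k * f (x/k)) * (φ (s-x) - φ (s+x)) ∧
    Integrable (fun x => 1/k * f (x/k) * (φ (s-x) + φ (s+x))) ∧
    Integrable (fun x => x * (1/k * f (x/k)) * (φ (s-x) - φ (s+x))) := by
  have hG : Integrable (fun x => 1/k * f (x/k)) := scaled_integrable hfint hk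
  have hGm : Integrable (fun x => |x| * (1/k * f (x/k))) := scaled_moment hfmom hk
  have hGpos : ∀ x, 0 < 1/k * f (x/k) := fun x => mul_pos (by positivity) (hfpos _)
  have hGcont : Continuous (fun x => 1/k * f (x/k)) :=
    continuous_const.mul (hfcont.comp (continuous_id.div_const k))
  have hc1 : Continuous fun x => φ (s - x) := hφcont.comp (continuous_const.sub continuous_id)
  have hc2 : Continuous fun x => φ (s + x) := hφcont.comp (continuous_const.add continuous_id)
  have hb1 : ∀ x, |φ (s - x)| ≤ φ 0 := fun x => by
    rw [abs_of_pos (hφpos _)]; exact hφbd _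
  have hb2 : ∀ x, |φ (s + x)| ≤ φ 0 := fun x => by
    rw [abs_of_pos (hφpos _)]; exact hφbd _
  have hID1 : Integrable (fun x => 1/k * f (x/k) * φ (s - x)) := integrable_mul_bdd hG hc1 hb1
  have hID2 : Integrable (fun x => 1/k * f (x/k) * φ (s + x)) := integrable_mul_bdd hG hc2 hb2
  have hφ0 : 0 < φ 0 := hφpos 0
  have hIN1 : Integrable (fun x => x * (1/k * f (x/k)) * φ (s - x)) := by
    refine Integrable.mono' (hGm.const_mul (φ 0))
      (((continuous_id.mul hGcont).mul hc1).aestronglyMeasurable) ?_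
    refine Filter.Eventually.of_forall fun x => ?_
    rw [Real.norm_eq_abs, abs_mul, abs_mul, abs_of_pos (hGpos x), abs_of_pos (hφpos _)]
    have h := mul_le_mul_of_nonneg_left (hφbd (s - x))
      (mul_nonneg (abs_nonneg x) (hGpos x).le)
    nlinarith [h]
  have hIN2 : Integrable (fun x => x * (1/k * f (x/k)) * φ (s + x)) := by
    refine Integrable.mono' (hGm.const_mul (φ 0))
      (((continuous_id.mul hGcont).mul hc2).aestronglyMeasurable) ?_
    refine Filter.Eventually.of_forall fun x => ?_
    rw [Real.norm_eq_abs, abs_mul, abs_mul, abs_of_pos (hGpos x), abs_of_pos (hφpos _)]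
    have h := mul_le_mul_of_nonneg_left (hφbd (s + x))
      (mul_nonneg (abs_nonneg x) (hGpos x).le)
    nlinarith [h]
  refine ⟨hID1, hIN1, ?_, ?_, ?_, ?_, ?_⟩
  · refine (integral_pos_iff_support_of_nonneg
      (fun x => (mul_pos (hGpos x) (hφpos _)).le) hID1).2 ?_
    have hsupp : Function.support (fun x => 1/k * f (x/k) * φ (s - x)) = univ :=
      eq_univ_of_forall fun x => (mul_pos (hGpos x) (hφpos _)).ne'
    rw [hsupp, Real.volume_univ]
    exact ENNReal.zero_lt_top
  · rw [split_pos hID1]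
    refine setIntegral_congr_fun measurableSet_Ioi (fun x hx => ?_)
    rw [show -x/k = -(x/k) by ring, hfe, show s - -x = s + x by ring]
    ring
  · rw [split_pos hIN1]
    refine setIntegral_congr_fun measurableSet_Ioi (fun x hx => ?_)
    rw [show -x/k = -(x/k) by ring, hfe, show s - -x = s + x by ring]
    ring
  · have h := hID1.add hID2
    simp only [mul_add]; exact h
  · have h := hIN1.sub hIN2
    simp only [mul_sub]; exact h

lemma odd_pair (f φ : ℝ → ℝ) (hfe : ∀ x, f (-x) = f x) (hφe : ∀ x, φ (-x) = φ x)
    (k s : ℝ) :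
    (∫ x, x * (1/k * f (x/k)) * φ (-s - x)) = - ∫ x, x * (1/k * f (x/k)) * φ (s - x) ∧
    (∫ x, 1/k * f (x/k) * φ (-s - x)) = ∫ x, 1/k * f (x/k) * φ (s - x) := by
  constructor
  · have h := integral_neg_eq_self (fun x => x * (1/k * f (x/k)) * φ (-s - x)) volume
    rw [← h]
    have heq : ∀ x : ℝ, (-x) * (1/k * f (-x/k)) * φ (-s - -x)
        = -(x * (1/k * f (x/k)) * φ (s - x)) := by
      intro x
      rw [show -x/k = -(x/k) by ring, hfe, show -s - -x = -(s - x) by ring, hφe]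
      ring
    simp_rw [heq]
    exact integral_neg _
  · have h := integral_neg_eq_self (fun x => 1/k * f (x/k) * φ (-s - x)) volume
    rw [← h]
    have heq : ∀ x : ℝ, 1/k * f (-x/k) * φ (-s - -x) = 1/k * f (x/k) * φ (s - x) := by
      intro x
      rw [show -x/k = -(x/k) by ring, hfe, show -s - -x = -(s - x) by ring, hφe]
    simp_rw [heq]


lemma main_nonneg (f φ : ℝ → ℝ)
    (hf : IsDensity f) (hfs : SymmAbout 0 f) (hflc : LogConcaveFn f)
    (hφ : IsDensity φ) (hφs : SymmAbout 0 φ) (hφlc : LogConcaveFn φ)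
    {k k' : ℝ} (hk' : 0 < k') (hk : k' < k) {s : ℝ} (hs : 0 ≤ s) :
    0 ≤ postMean (fun x => 1/k' * f (x/k')) φ s ∧
    postMean (fun x => 1/k' * f (x/k')) φ s ≤ postMean (fun x => 1/k * f (x/k)) φ s := by
  obtain ⟨hfpos, hfcd, hfone, hfmom⟩ := hf
  obtain ⟨hφpos, hφcd, hφone, hφmom⟩ := hφ
  have hfe : ∀ x, f (-x) = f x := by
    intro x; have h := hfs x; simp only [zero_add, zero_sub] at h; exact h.symm
  have hφe : ∀ x, φ (-x) = φ x := by
    intro x; have h := hφs x; simp only [zero_add, zero_sub] at h; exact h.symm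
  have hfint : Integrable f := by
    by_contra hcon
    rw [integral_undef hcon] at hfone
    exact one_ne_zero hfone.symm
  have hfcont := hfcd.continuous
  have hφcont := hφcd.continuous
  have hφbd := bounded_of_logconcave_even hφpos hφlc hφe
  have hk0 : 0 < k := hk'.trans hk
  obtain ⟨hD1, hN1, hDpos, hDrep, hNrep, hBint, hAint⟩ :=
    rep f φ hfpos hfint hfmom hfe hfcont hφpos hφcont hφbd hφe hk0 s
  obtain ⟨hD1', hN1', hDpos', hDrep', hNrep', hBint', hAint'⟩ :=
    rep f φ hfpos hfint hfmom hfe hfcont hφpos hφcont hφbd hφe hk' s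
  have hGpos' : ∀ x : ℝ, 0 < 1/k' * f (x/k') := fun x => mul_pos (by positivity) (hfpos _)
  constructor
  · apply div_nonneg _ hDpos'.le
    rw [hNrep']
    refine setIntegral_nonneg measurableSet_Ioi (fun x hx => ?_)
    have hx0 : (0:ℝ) < x := hx
    have hcc := cross_even hφpos hφlc hφe hs (le_of_lt hx0 : (0:ℝ) ≤ x)
    simp only [sub_zero, add_zero] at hcc
    have hphi : 0 ≤ φ (s - x) - φ (s + x) := by nlinarith [hφpos s]
    exact mul_nonneg (mul_nonneg hx0.le (hGpos' x).le) hphi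
  · unfold postMean
    rw [div_le_div_iff₀ hDpos' hDpos]
    rw [hNrep, hNrep', hDrep, hDrep']
    set μ0 := (volume : Measure ℝ).restrict (Ioi (0:ℝ)) with hμ0
    set A : ℝ → ℝ := fun x => x * (1/k * f (x/k)) * (φ (s-x) - φ (s+x)) with hA
    set B : ℝ → ℝ := fun x => 1/k * f (x/k) * (φ (s-x) + φ (s+x)) with hB
    set A' : ℝ → ℝ := fun x => x * (1/k' * f (x/k')) * (φ (s-x) - φ (s+x)) with hA'
    set B' : ℝ → ℝ := fun x => 1/k' * f (x/k') * (φ (s-x) + φ (s+x)) with hB'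
    have hAi : Integrable A μ0 := hAint.restrict
    have hBi : Integrable B μ0 := hBint.restrict
    have hAi' : Integrable A' μ0 := hAint'.restrict
    have hBi' : Integrable B' μ0 := hBint'.restrict
    have e1 : ∫ z : ℝ × ℝ, A z.1 * B' z.2 ∂(μ0.prod μ0) = (∫ x, A x ∂μ0) * ∫ x, B' x ∂μ0 :=
      integral_prod_mul A B'
    have e2 : ∫ z : ℝ × ℝ, B' z.1 * A z.2 ∂(μ0.prod μ0) = (∫ x, B' x ∂μ0) * ∫ x, A x ∂μ0 :=
      integral_prod_mul B' A
    have e3 : ∫ z : ℝ × ℝ, A' z.1 * B z.2 ∂(μ0.prod μ0) = (∫ x, A' x ∂μ0) * ∫ x, B x ∂μ0 :=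
      integral_prod_mul A' B
    have e4 : ∫ z : ℝ × ℝ, B z.1 * A' z.2 ∂(μ0.prod μ0) = (∫ x, B x ∂μ0) * ∫ x, A' x ∂μ0 :=
      integral_prod_mul B A'
    have hsum : ∫ z : ℝ × ℝ,
        (A z.1 * B' z.2 + B' z.1 * A z.2 - A' z.1 * B z.2 - B z.1 * A' z.2) ∂(μ0.prod μ0)
        = (∫ x, A x ∂μ0) * (∫ x, B' x ∂μ0) + (∫ x, B' x ∂μ0) * (∫ x, A x ∂μ0)
          - (∫ x, A' x ∂μ0) * (∫ x, B x ∂μ0) - (∫ x, B x ∂μ0) * (∫ x, A' x ∂μ0) := by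
      have i12 : Integrable (fun z : ℝ × ℝ => A z.1 * B' z.2 + B' z.1 * A z.2)
          (μ0.prod μ0) := (hAi.mul_prod hBi').add (hBi'.mul_prod hAi)
      have i123 : Integrable
          (fun z : ℝ × ℝ => A z.1 * B' z.2 + B' z.1 * A z.2 - A' z.1 * B z.2)
          (μ0.prod μ0) := i12.sub (hAi'.mul_prod hBi)
      rw [integral_sub i123 (hBi.mul_prod hAi'),
        integral_sub i12 (hAi'.mul_prod hBi),
        integral_add (hAi.mul_prod hBi') (hBi'.mul_prod hAi), e1, e2, e3, e4]
    have hnn : 0 ≤ ∫ z : ℝ × ℝ,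
        (A z.1 * B' z.2 + B' z.1 * A z.2 - A' z.1 * B z.2 - B z.1 * A' z.2) ∂(μ0.prod μ0) := by
      rw [hμ0, Measure.prod_restrict]
      refine setIntegral_nonneg (measurableSet_Ioi.prod measurableSet_Ioi) ?_
      rintro ⟨u, v⟩ ⟨hu, hv⟩
      have hu0 : (0:ℝ) < u := hu
      have hv0 : (0:ℝ) < v := hv
      simpa [hA, hB, hA', hB'] using
        pointwise_key hfpos hflc hfe hφpos hφlc hφe hk' hk hs hu0 hv0
    nlinarith [hsum, hnn]


/-- Corollary 3: scaling down the prior attenuates updating. -/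
theorem scaling_down_prior_attenuates
    (fX fε : ℝ → ℝ)
    (hfX : IsDensity fX) (hfXsym : SymmAbout 0 fX) (hfXlc : LogConcaveFn fX)
    (hfε : IsDensity fε) (hfεsym : SymmAbout 0 fε) (hfεlc : LogConcaveFn fε)
    (k k' : ℝ) (hk' : 0 < k') (hk : k' < k) :
    (∀ s ≤ (0 : ℝ),
        postMean (fun x => (1 / k) * fX (x / k)) fε s ≤
          postMean (fun x => (1 / k') * fX (x / k')) fε s ∧
        postMean (fun x => (1 / k') * fX (x / k')) fε s ≤ 0) ∧
    (∀ s : ℝ, 0 ≤ s →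
        0 ≤ postMean (fun x => (1 / k') * fX (x / k')) fε s ∧
        postMean (fun x => (1 / k') * fX (x / k')) fε s ≤
          postMean (fun x => (1 / k) * fX (x / k)) fε s) := by
  have hfe : ∀ x, fX (-x) = fX x := by
    intro x; have h := hfXsym x; simp only [zero_add, zero_sub] at h; exact h.symm
  have hφe : ∀ x, fε (-x) = fε x := by
    intro x; have h := hfεsym x; simp only [zero_add, zero_sub] at h; exact h.symm
  constructor
  · intro s hs
    have hmain := main_nonneg fX fε hfX hfXsym hfXlc hfε hfεsym hfεlc hk' hk
      (s := -s) (by linarith)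
    obtain ⟨hNo, hDo⟩ := odd_pair fX fε hfe hφe k s
    obtain ⟨hNo', hDo'⟩ := odd_pair fX fε hfe hφe k' s
    have hEk : postMean (fun x => (1 / k) * fX (x / k)) fε s
        = - postMean (fun x => (1 / k) * fX (x / k)) fε (-s) := by
      unfold postMean
      rw [show (∫ x, x * (1/k * fX (x/k)) * fε (s - x))
          = - ∫ x, x * (1/k * fX (x/k)) * fε (-s - x) from by rw [hNo, neg_neg],
        show (∫ x, 1/k * fX (x/k) * fε (s - x)) = ∫ x, 1/k * fX (x/k) * fε (-s - x) from
          hDo.symm, neg_div]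
    have hEk' : postMean (fun x => (1 / k') * fX (x / k')) fε s
        = - postMean (fun x => (1 / k') * fX (x / k')) fε (-s) := by
      unfold postMean
      rw [show (∫ x, x * (1/k' * fX (x/k')) * fε (s - x))
          = - ∫ x, x * (1/k' * fX (x/k')) * fε (-s - x) from by rw [hNo', neg_neg],
        show (∫ x, 1/k' * fX (x/k') * fε (s - x)) = ∫ x, 1/k' * fX (x/k') * fε (-s - x) from
          hDo'.symm, neg_div]
    rw [hEk, hEk']
    constructor
    · exact neg_le_neg hmain.2
    · exact neg_nonpos_of_nonneg hmain.1
  · intro s hs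
    exact main_nonneg fX fε hfX hfXsym hfXlc hfε hfεsym hfεlc hk' hk hs
end
end
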